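/- arXiv:2003.13521 — 6 statements merged into one kernel-verified Lean document; each statement's English description precedes it below -/
import Mathlib

section
/- For every ε > 0 there exists n_ε such that for all n ≥ n_ε: if the bias b satisfies b ≥ (1+ε)·n/log n, then Breaker has a winning strategy in the (1:b) Maker-Breaker strong connectivity game on the complete digraph K⃗_n, i.e. Breaker can guarantee that at the end of play the digraph on [n] formed by Maker's claimed edges is not strongly connected. -/
/-- The board of the complete digraph on `Fin n`: all ordered pairs `(i, j)` with `i ≠ j`. -/
def diboard (n : ℕ) : Finset (Fin n × Fin n) :=
  Finset.univ.filter (fun p => p.1 ≠ p.2)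

/-- A digraph on `Fin n`, given by its edge set, is strongly connected if every vertex is
reachable from every other vertex by a directed path. -/
def StronglyConnected {n : ℕ} (E : Finset (Fin n × Fin n)) : Prop :=
  ∀ u v : Fin n, Relation.ReflTransGen (fun a c => (a, c) ∈ E) u v

/-- `MakerWins board b P M B` : in the (1 : b) Maker-Breaker game on `board`, from the
position where Maker has claimed `M`, Breaker has claimed `B`, and Maker is to move,
Maker can force that when the board is exhausted the final position satisfies
`P (Maker's set) (Breaker's set)`.  Maker claims one unclaimed element per turn, Breaker
then claims `b` unclaimed elements (or all remaining ones, if fewer than `b` remain). -/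
inductive MakerWins {X : Type*} [DecidableEq X] (board : Finset X) (b : ℕ)
    (P : Finset X → Finset X → Prop) : Finset X → Finset X → Prop
  | terminal {M B : Finset X} (hend : board \ (M ∪ B) = ∅) (hP : P M B) :
      MakerWins board b P M B
  | move {M B : Finset X} (x : X) (hx : x ∈ board \ (M ∪ B))
      (h : ∀ Y ⊆ board \ (insert x M ∪ B),
        Y.card = min b (board \ (insert x M ∪ B)).card →
        MakerWins board b P (insert x M) (B ∪ Y)) :
      MakerWins board b P M B

/-- `BreakerWins board b P M B` : in the (1 : b) Maker-Breaker game on `board`, from the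
position where Maker has claimed `M`, Breaker has claimed `B`, and Maker is to move,
Breaker can force that when the board is exhausted the final position satisfies
`P (Maker's set) (Breaker's set)`. -/
inductive BreakerWins {X : Type*} [DecidableEq X] (board : Finset X) (b : ℕ)
    (P : Finset X → Finset X → Prop) : Finset X → Finset X → Prop
  | terminal {M B : Finset X} (hend : board \ (M ∪ B) = ∅) (hP : P M B) :
      BreakerWins board b P M B
  | move {M B : Finset X} (hne : board \ (M ∪ B) ≠ ∅)
      (Y : ∀ x ∈ board \ (M ∪ B), Finset X)
      (hY : ∀ (x : X) (hx : x ∈ board \ (M ∪ B)),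
        Y x hx ⊆ board \ (insert x M ∪ B) ∧
        (Y x hx).card = min b (board \ (insert x M ∪ B)).card)
      (h : ∀ (x : X) (hx : x ∈ board \ (M ∪ B)),
        BreakerWins board b P (insert x M) (B ∪ Y x hx)) :
      BreakerWins board b P M B

open Finset

lemma mem_diboard {n : ℕ} (p : Fin n × Fin n) : p ∈ diboard n ↔ p.1 ≠ p.2 := by
  simp [diboard]

lemma not_sc {n : ℕ} (hn : 2 ≤ n) {M : Finset (Fin n × Fin n)} (v : Fin n)
    (hv : ∀ w, (v, w) ∉ M) : ¬ StronglyConnected M := by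
  intro h
  obtain ⟨u, -, hu⟩ := Finset.exists_mem_ne
    (s := (Finset.univ : Finset (Fin n))) (by simp; omega) v
  rcases (h v u).cases_head with h1 | ⟨c, hc, -⟩
  · exact hu h1.symm
  · exact hv c hc

lemma persist {n b : ℕ} (hn : 2 ≤ n) :
    ∀ (N : ℕ) (M B : Finset (Fin n × Fin n)), ((diboard n) \ (M ∪ B)).card ≤ N →
    ∀ v : Fin n, (∀ w, (v, w) ∉ M) → (∀ w, w ≠ v → (v, w) ∈ B) →
    BreakerWins (diboard n) b (fun M _ => ¬ StronglyConnected M) M B := by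
  intro N
  induction N with
  | zero =>
    intro M B hcard v hv _
    exact BreakerWins.terminal (Finset.card_eq_zero.mp (Nat.le_zero.mp hcard)) (not_sc hn v hv)
  | succ N ih =>
    intro M B hcard v hv hB
    by_cases hend : diboard n \ (M ∪ B) = ∅
    · exact BreakerWins.terminal hend (not_sc hn v hv)
    · have key : ∀ x ∈ diboard n \ (M ∪ B), ∃ Y : Finset (Fin n × Fin n),
          Y ⊆ diboard n \ (insert x M ∪ B) ∧
          Y.card = min b (diboard n \ (insert x M ∪ B)).card ∧
          BreakerWins (diboard n) b (fun M _ => ¬ StronglyConnected M) (insert x M) (B ∪ Y) := by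
        intro x hx
        obtain ⟨Y, hYsub, hYcard⟩ := Finset.exists_subset_card_eq
          (min_le_right b (diboard n \ (insert x M ∪ B)).card)
        refine ⟨Y, hYsub, hYcard, ?_⟩
        refine ih (insert x M) (B ∪ Y) ?_ v ?_ ?_
        · have hsub : diboard n \ (insert x M ∪ (B ∪ Y)) ⊆ (diboard n \ (M ∪ B)).erase x := by
            intro e he
            simp only [Finset.mem_sdiff, Finset.mem_union, Finset.mem_insert, not_or,
              Finset.mem_erase] at he ⊢
            tauto
          have h1 : ((diboard n \ (M ∪ B)).erase x).card = (diboard n \ (M ∪ B)).card - 1 :=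
            Finset.card_erase_of_mem hx
          have := Finset.card_le_card hsub
          omega
        · intro w hw
          rcases Finset.mem_insert.mp hw with h | h
          · subst h
            have hxb := (Finset.mem_sdiff.mp hx).1
            have hwv : w ≠ v := fun e => (mem_diboard _).mp hxb (by simp [e])
            exact (Finset.mem_sdiff.mp hx).2 (Finset.mem_union_right _ (hB w hwv))
          · exact hv w h
        · intro w hwv
          exact Finset.mem_union_left _ (hB w hwv)
      exact BreakerWins.move hend (fun x hx => (key x hx).choose)
        (fun x hx => ⟨(key x hx).choose_spec.1, (key x hx).choose_spec.2.1⟩)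
        (fun x hx => (key x hx).choose_spec.2.2)

lemma claim_exists {α β : Type*} [DecidableEq α] [DecidableEq β] :
    ∀ (k : ℕ) (F : α → Finset β) (A : Finset α) (s : ℕ) (T : Finset α),
    (∀ v ∈ A, ∀ w ∈ A, v ≠ w → Disjoint (F v) (F w)) → T ⊆ A →
    (∀ v ∈ A, (F v).card = s + (if v ∈ T then 1 else 0)) →
    k ≤ s * A.card + T.card →
    ∃ (Y : Finset β) (s' : ℕ) (T' : Finset α),
      Y ⊆ A.biUnion F ∧ Y.card = k ∧ T' ⊆ A ∧
      (∀ v ∈ A, (F v \ Y).card = s' + (if v ∈ T' then 1 else 0)) ∧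
      s' * A.card + T'.card + k = s * A.card + T.card := by
  intro k
  induction k with
  | zero =>
    intro F A s T hdisj hTA hshape hk
    exact ⟨∅, s, T, Finset.empty_subset _, Finset.card_empty, hTA,
      by simpa using hshape, by simp⟩
  | succ k ih =>
    intro F A s T hdisj hTA hshape hk
    have hA : A.Nonempty := by
      rcases A.eq_empty_or_nonempty with h | h
      · subst h
        have : T = ∅ := Finset.subset_empty.mp hTA
        simp [this] at hk
      · exact h
    by_cases hT : T.Nonempty
    · -- there is a box of size s+1
      obtain ⟨v₀, hv₀T⟩ := hT
      have hv₀A := hTA hv₀T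
      have hcard : (F v₀).card = s + 1 := by rw [hshape v₀ hv₀A, if_pos hv₀T]
      obtain ⟨x, hx⟩ : (F v₀).Nonempty := Finset.card_pos.mp (by omega)
      set F₁ : α → Finset β := fun v => F v \ {x} with hF₁
      have hxnot : ∀ v ∈ A, v ≠ v₀ → x ∉ F v := by
        intro v hv hne hxv
        exact (Finset.disjoint_left.mp (hdisj v hv v₀ hv₀A hne)) hxv hx
      have hdisj₁ : ∀ v ∈ A, ∀ w ∈ A, v ≠ w → Disjoint (F₁ v) (F₁ w) := by
        intro v hv w hw hne
        exact Finset.disjoint_of_subset_left (Finset.sdiff_subset)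
          (Finset.disjoint_of_subset_right (Finset.sdiff_subset) (hdisj v hv w hw hne))
      have hF₁eq : ∀ v ∈ A, v ≠ v₀ → F₁ v = F v := by
        intro v hv hne
        simp only [hF₁]
        exact Finset.sdiff_eq_self_of_disjoint (by simp [hxnot v hv hne])
      have hshape₁ : ∀ v ∈ A, (F₁ v).card = s + (if v ∈ T.erase v₀ then 1 else 0) := by
        intro v hv
        by_cases hvv : v = v₀
        · subst hvv
          have : (F₁ v).card = (F v).card - 1 := by
            simp only [hF₁]
            rw [Finset.card_sdiff_of_subset (by simpa using hx)]
            simp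
          rw [this, hcard]
          simp
        · rw [hF₁eq v hv hvv, hshape v hv]
          have : v ∈ T.erase v₀ ↔ v ∈ T := by simp [Finset.mem_erase, hvv]
          simp [this]
      have hk₁ : k ≤ s * A.card + (T.erase v₀).card := by
        rw [Finset.card_erase_of_mem hv₀T]
        have : 1 ≤ T.card := Finset.card_pos.mpr ⟨v₀, hv₀T⟩
        omega
      obtain ⟨Y', s', T', hY'sub, hY'card, hT'A, hshape', hsum⟩ :=
        ih F₁ A s (T.erase v₀) hdisj₁ ((Finset.erase_subset _ _).trans hTA) hshape₁ hk₁
      have hxY' : x ∉ Y' := by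
        intro h
        obtain ⟨v, hv, hxv⟩ := Finset.mem_biUnion.mp (hY'sub h)
        simp [hF₁] at hxv
      refine ⟨insert x Y', s', T', ?_, ?_, hT'A, ?_, ?_⟩
      · intro y hy
        rcases Finset.mem_insert.mp hy with h | h
        · subst h; exact Finset.mem_biUnion.mpr ⟨v₀, hv₀A, hx⟩
        · obtain ⟨v, hv, hyv⟩ := Finset.mem_biUnion.mp (hY'sub h)
          exact Finset.mem_biUnion.mpr ⟨v, hv, Finset.sdiff_subset hyv⟩
      · rw [Finset.card_insert_of_notMem hxY', hY'card]
      · intro v hv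
        have : F v \ insert x Y' = F₁ v \ Y' := by
          simp only [hF₁]
          ext y
          simp only [Finset.mem_sdiff, Finset.mem_insert, Finset.mem_singleton, not_or]
          tauto
        rw [this]
        exact hshape' v hv
      · rw [Finset.card_erase_of_mem hv₀T] at hsum
        have : 1 ≤ T.card := Finset.card_pos.mpr ⟨v₀, hv₀T⟩
        omega
    · -- all boxes have size s
      have hT0 : T = ∅ := Finset.not_nonempty_iff_eq_empty.mp hT
      subst hT0
      simp only [Finset.card_empty, add_zero] at hk
      obtain ⟨v₀, hv₀A⟩ := hA
      have hs : 1 ≤ s := by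
        by_contra h
        have : s = 0 := by omega
        subst this
        simp at hk
      obtain ⟨t, rfl⟩ : ∃ t, s = t + 1 := ⟨s - 1, by omega⟩
      have hcard : (F v₀).card = t + 1 := by simpa using hshape v₀ hv₀A
      obtain ⟨x, hx⟩ : (F v₀).Nonempty := Finset.card_pos.mp (by omega)
      set F₁ : α → Finset β := fun v => F v \ {x} with hF₁
      have hxnot : ∀ v ∈ A, v ≠ v₀ → x ∉ F v := by
        intro v hv hne hxv
        exact (Finset.disjoint_left.mp (hdisj v hv v₀ hv₀A hne)) hxv hx
      have hdisj₁ : ∀ v ∈ A, ∀ w ∈ A, v ≠ w → Disjoint (F₁ v) (F₁ w) := by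
        intro v hv w hw hne
        exact Finset.disjoint_of_subset_left (Finset.sdiff_subset)
          (Finset.disjoint_of_subset_right (Finset.sdiff_subset) (hdisj v hv w hw hne))
      have hF₁eq : ∀ v ∈ A, v ≠ v₀ → F₁ v = F v := by
        intro v hv hne
        simp only [hF₁]
        exact Finset.sdiff_eq_self_of_disjoint (by simp [hxnot v hv hne])
      have hshape₁ : ∀ v ∈ A, (F₁ v).card = t + (if v ∈ A.erase v₀ then 1 else 0) := by
        intro v hv
        by_cases hvv : v = v₀
        · subst hvv
          have : (F₁ v).card = (F v).card - 1 := by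
            simp only [hF₁]
            rw [Finset.card_sdiff_of_subset (by simpa using hx)]
            simp
          rw [this, hcard]
          simp
        · rw [hF₁eq v hv hvv, hshape v hv]
          have : v ∈ A.erase v₀ := Finset.mem_erase.mpr ⟨hvv, hv⟩
          simp [this]
      have hAc : 1 ≤ A.card := Finset.card_pos.mpr ⟨v₀, hv₀A⟩
      have hmul : t * A.card + A.card = (t + 1) * A.card := by ring
      have hk₁ : k ≤ t * A.card + (A.erase v₀).card := by
        rw [Finset.card_erase_of_mem hv₀A]
        omega
      obtain ⟨Y', s', T', hY'sub, hY'card, hT'A, hshape', hsum⟩ :=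
        ih F₁ A t (A.erase v₀) hdisj₁ (Finset.erase_subset _ _) hshape₁ hk₁
      have hxY' : x ∉ Y' := by
        intro h
        obtain ⟨v, hv, hxv⟩ := Finset.mem_biUnion.mp (hY'sub h)
        simp [hF₁] at hxv
      refine ⟨insert x Y', s', T', ?_, ?_, hT'A, ?_, ?_⟩
      · intro y hy
        rcases Finset.mem_insert.mp hy with h | h
        · subst h; exact Finset.mem_biUnion.mpr ⟨v₀, hv₀A, hx⟩
        · obtain ⟨v, hv, hyv⟩ := Finset.mem_biUnion.mp (hY'sub h)
          exact Finset.mem_biUnion.mpr ⟨v, hv, Finset.sdiff_subset hyv⟩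
      · rw [Finset.card_insert_of_notMem hxY', hY'card]
      · intro v hv
        have : F v \ insert x Y' = F₁ v \ Y' := by
          simp only [hF₁]
          ext y
          simp only [Finset.mem_sdiff, Finset.mem_insert, Finset.mem_singleton, not_or]
          tauto
        rw [this]
        exact hshape' v hv
      · rw [Finset.card_erase_of_mem hv₀A] at hsum
        simp only [Finset.card_empty, add_zero]
        omega

def Fbox (n : ℕ) (M B : Finset (Fin n × Fin n)) (v : Fin n) : Finset (Fin n × Fin n) :=
  (diboard n \ (M ∪ B)).filter (fun e => e.1 = v)

lemma Fbox_subset (n : ℕ) (M B : Finset (Fin n × Fin n)) (v : Fin n) :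
    Fbox n M B v ⊆ diboard n \ (M ∪ B) := Finset.filter_subset _ _

lemma Fbox_disjoint {n : ℕ} (M B : Finset (Fin n × Fin n)) {v w : Fin n} (h : v ≠ w) :
    Disjoint (Fbox n M B v) (Fbox n M B w) := by
  rw [Finset.disjoint_left]
  intro e he1 he2
  simp only [Fbox, Finset.mem_filter] at he1 he2
  exact h (he1.2 ▸ he2.2)

lemma Fbox_maker {n : ℕ} {M B : Finset (Fin n × Fin n)} {x : Fin n × Fin n} {v : Fin n}
    (h : x.1 ≠ v) : Fbox n (insert x M) B v = Fbox n M B v := by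
  ext e
  have hne : e.1 = v → e ≠ x := fun hv he => h (by rw [← he]; exact hv)
  simp only [Fbox, Finset.mem_filter, Finset.mem_sdiff, Finset.mem_union, Finset.mem_insert,
    not_or]
  tauto

lemma Fbox_breaker {n : ℕ} {M B Y : Finset (Fin n × Fin n)} {v : Fin n} :
    Fbox n M (B ∪ Y) v = Fbox n M B v \ Y := by
  ext e
  simp only [Fbox, Finset.mem_filter, Finset.mem_sdiff, Finset.mem_union, not_or]
  tauto

lemma Fbox_init (n : ℕ) (v : Fin n) : (Fbox n ∅ ∅ v).card = n - 1 := by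
  have himg : Fbox n ∅ ∅ v = (Finset.univ.erase v).image (fun w => (v, w)) := by
    ext e
    simp only [Fbox, diboard, Finset.mem_filter, Finset.mem_sdiff, Finset.mem_union,
      Finset.mem_image, Finset.mem_erase, Finset.mem_univ, Finset.empty_union,
      Finset.notMem_empty, not_false_iff, true_and, and_true]
    constructor
    · rintro ⟨hne, h1⟩
      exact ⟨e.2, fun h => hne (by rw [h1, h]), by rw [← h1]⟩
    · rintro ⟨w, hwv, rfl⟩
      exact ⟨fun h => hwv h.symm, rfl⟩
  rw [himg, Finset.card_image_of_injective _ (fun a c h => (Prod.mk.injEq _ _ _ _).mp h |>.2),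
    Finset.card_erase_of_mem (Finset.mem_univ v), Finset.card_univ, Fintype.card_fin]

lemma box_cover {n : ℕ} {M B : Finset (Fin n × Fin n)} {v : Fin n}
    (halive : ∀ w, (v, w) ∉ M) (h0 : Fbox n M B v = ∅) {w : Fin n} (hwv : w ≠ v) :
    (v, w) ∈ B := by
  by_contra hB
  have hmem : (v, w) ∈ Fbox n M B v := by
    simp only [Fbox, Finset.mem_filter, Finset.mem_sdiff, Finset.mem_union, not_or]
    exact ⟨⟨(mem_diboard _).mpr (fun h => hwv h.symm), halive w, hB⟩, trivial⟩
  rw [h0] at hmem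
  exact Finset.notMem_empty _ hmem

lemma main_lemma {n b : ℕ} (hn : 2 ≤ n) (hb : 2 ≤ b) :
    ∀ (N : ℕ) (M B : Finset (Fin n × Fin n)), ((diboard n) \ (M ∪ B)).card ≤ N →
    ∀ (A T : Finset (Fin n)) (s : ℕ), T ⊆ A → 2 ≤ A.card →
    (∀ v ∈ A, ∀ w, (v, w) ∉ M) →
    (∀ v ∈ A, (Fbox n M B v).card = s + (if v ∈ T then 1 else 0)) →
    ((s * A.card + T.card : ℕ) : ℝ) ≤ (A.card : ℝ) * ((b : ℝ) - 1) * ((harmonic (A.card - 1) : ℚ) : ℝ) →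
    BreakerWins (diboard n) b (fun M _ => ¬ StronglyConnected M) M B := by
  intro N
  induction N with
  | zero =>
    intro M B hcard A T s hTA hA2 halive hshape hnum
    obtain ⟨v, hvA⟩ : A.Nonempty := Finset.card_pos.mp (by omega)
    have hfree : diboard n \ (M ∪ B) = ∅ := Finset.card_eq_zero.mp (Nat.le_zero.mp hcard)
    have hbox0 : Fbox n M B v = ∅ :=
      Finset.subset_empty.mp (hfree ▸ Fbox_subset n M B v)
    exact persist hn ((diboard n \ (M ∪ B)).card) M B le_rfl v (halive v hvA)
      (fun w hwv => box_cover (halive v hvA) hbox0 hwv)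
  | succ N ih =>
    intro M B hcard A T s hTA hA2 halive hshape hnum
    by_cases h0 : ∃ v ∈ A, Fbox n M B v = ∅
    · obtain ⟨v, hvA, hv0⟩ := h0
      exact persist hn ((diboard n \ (M ∪ B)).card) M B le_rfl v (halive v hvA)
        (fun w hwv => box_cover (halive v hvA) hv0 hwv)
    · push_neg at h0
      have hne : diboard n \ (M ∪ B) ≠ ∅ := by
        obtain ⟨v, hvA⟩ : A.Nonempty := Finset.card_pos.mp (by omega)
        intro hemp
        exact (h0 v hvA).ne_empty (Finset.subset_empty.mp (hemp ▸ Fbox_subset n M B v))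
      by_cases hcase : b ≤ s
      · -- INDUCTIVE CASE : all boxes still large, claim b cells evenly
        have hp3 : 3 ≤ A.card := by
          by_contra hp
          have hp2 : A.card = 2 := by omega
          rw [hp2] at hnum
          have h1 : ((harmonic (2 - 1) : ℚ) : ℝ) = 1 := by norm_num [harmonic]
          rw [h1] at hnum
          have hbs : (b : ℝ) ≤ (s : ℝ) := by exact_mod_cast hcase
          have hb2 : (2 : ℝ) ≤ (b : ℝ) := by exact_mod_cast hb
          have hc0 : (0 : ℝ) ≤ (T.card : ℝ) := by positivity
          push_cast at hnum
          linarith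
        have key : ∀ x ∈ diboard n \ (M ∪ B), ∃ Y : Finset (Fin n × Fin n),
            Y ⊆ diboard n \ (insert x M ∪ B) ∧
            Y.card = min b (diboard n \ (insert x M ∪ B)).card ∧
            BreakerWins (diboard n) b (fun M _ => ¬ StronglyConnected M) (insert x M) (B ∪ Y) := by
          intro x hx
          set A' := A.erase x.1 with hA'
          set T' := T.erase x.1 with hT'
          have hT'A' : T' ⊆ A' := fun v hv =>
            Finset.mem_erase.mpr ⟨(Finset.mem_erase.mp hv).1, hTA (Finset.mem_erase.mp hv).2⟩
          have hA'low : A.card - 1 ≤ A'.card := Finset.pred_card_le_card_erase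
          have hA'2 : 2 ≤ A'.card := by omega
          have hshape' : ∀ v ∈ A', (Fbox n (insert x M) B v).card
              = s + (if v ∈ T' then 1 else 0) := by
            intro v hv
            obtain ⟨hvx, hvA⟩ := Finset.mem_erase.mp hv
            rw [Fbox_maker (fun h => hvx h.symm), hshape v hvA]
            congr 1
            simp [hT', Finset.mem_erase, hvx]
          have hdisj : ∀ v ∈ A', ∀ w ∈ A', v ≠ w →
              Disjoint (Fbox n (insert x M) B v) (Fbox n (insert x M) B w) :=
            fun v _ w _ hvw => Fbox_disjoint _ _ hvw
          have hk : b ≤ s * A'.card + T'.card := by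
            have h1 : s ≤ s * A'.card := Nat.le_mul_of_pos_right s (by omega)
            omega
          obtain ⟨Y, s'', T'', hYsub, hYcard, hT''A', hshape'', hsum⟩ :=
            claim_exists b (Fbox n (insert x M) B) A' s T' hdisj hT'A' hshape' hk
          have hYsub' : Y ⊆ diboard n \ (insert x M ∪ B) :=
            hYsub.trans (Finset.biUnion_subset.mpr (fun v _ => Fbox_subset n _ _ v))
          have hYmin : Y.card = min b (diboard n \ (insert x M ∪ B)).card := by
            rw [hYcard]
            exact (min_eq_left (hYcard ▸ Finset.card_le_card hYsub')).symm
          refine ⟨Y, hYsub', hYmin, ?_⟩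
          refine ih (insert x M) (B ∪ Y) ?_ A' T'' s'' hT''A' hA'2 ?_ ?_ ?_
          · -- measure decreases
            have hsub : diboard n \ (insert x M ∪ (B ∪ Y)) ⊆ (diboard n \ (M ∪ B)).erase x := by
              intro e he
              simp only [Finset.mem_sdiff, Finset.mem_union, Finset.mem_insert, not_or,
                Finset.mem_erase] at he ⊢
              tauto
            have h1 : ((diboard n \ (M ∪ B)).erase x).card = (diboard n \ (M ∪ B)).card - 1 :=
              Finset.card_erase_of_mem hx
            have := Finset.card_le_card hsub
            omega
          · -- alive
            intro v hv w hw
            obtain ⟨hvx, hvA⟩ := Finset.mem_erase.mp hv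
            rcases Finset.mem_insert.mp hw with h | h
            · exact hvx (by rw [← h])
            · exact halive v hvA w h
          · -- shape
            intro v hv
            rw [Fbox_breaker]
            exact hshape'' v hv
          · -- numeric invariant
            by_cases hxA : x.1 ∈ A
            · -- a box was destroyed by Maker
              have hA'card : A'.card = A.card - 1 := Finset.card_erase_of_mem hxA
              have hT'le : T'.card ≤ T.card := Finset.card_erase_le
              have hTle : T.card ≤ A.card := Finset.card_le_card hTA
              set p := A.card with hp
              have hidx : A'.card - 1 = p - 2 := by omega
              -- real abbreviations
              set P : ℝ := (p : ℝ) with hP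
              have hP3 : (3 : ℝ) ≤ P := by rw [hP]; exact_mod_cast hp3
              have hPpos : (0 : ℝ) < P := by linarith
              set H1 : ℝ := ((harmonic (p - 1) : ℚ) : ℝ) with hH1
              set H2 : ℝ := ((harmonic (p - 2) : ℚ) : ℝ) with hH2
              have hH2nn : 0 ≤ H2 := by
                rw [hH2]
                have : (0:ℚ) ≤ harmonic (p-2) := (harmonic_pos (by omega)).le
                exact_mod_cast this
              have hPne : P - 1 ≠ 0 := by intro h; rw [sub_eq_zero] at h; linarith
              have hrec : (P - 1) * H1 = (P - 1) * H2 + 1 := by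
                have h1 : p - 2 + 1 = p - 1 := by omega
                have h2 : harmonic (p - 1) = harmonic (p - 2) + ((p - 1 : ℕ) : ℚ)⁻¹ := by
                  rw [← h1]
                  exact harmonic_succ (p - 2)
                have hc : ((p - 1 : ℕ) : ℝ) = P - 1 := by
                  rw [hP]
                  push_cast [Nat.cast_sub (by omega : 1 ≤ p)]
                  ring
                have h4 : H1 = H2 + (P - 1)⁻¹ := by
                  rw [hH1, hH2, h2]
                  push_cast
                  rw [hc]
                rw [h4]
                field_simp
              -- cast hsum
              have hA'cast : ((A'.card : ℕ) : ℝ) = P - 1 := by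
                rw [hA'card, hP]
                push_cast [Nat.cast_sub (by omega : 1 ≤ p)]
                ring
              have hsumR : ((s'' * A'.card + T''.card : ℕ) : ℝ)
                  = (s : ℝ) * (P - 1) + (T'.card : ℝ) - (b : ℝ) := by
                have h5 : ((s'' * A'.card + T''.card + b : ℕ) : ℝ)
                    = ((s * A'.card + T'.card : ℕ) : ℝ) := by
                  exact_mod_cast congrArg (fun t : ℕ => (t : ℝ)) hsum
                push_cast at h5 ⊢
                rw [hA'cast] at h5 ⊢
                linarith
              have hnumR : (s : ℝ) * P + (T.card : ℝ) ≤ P * ((b:ℝ) - 1) * H1 := by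
                have := hnum
                push_cast at this
                linarith [this]
              rw [hsumR, hA'cast, hidx, ← hH2]
              -- goal : s * (P-1) + T'.card - b ≤ (P-1) * (b-1) * H2
              have hb2 : (2 : ℝ) ≤ (b : ℝ) := by exact_mod_cast hb
              have hT'c : ((T'.card : ℕ) : ℝ) ≤ ((T.card : ℕ) : ℝ) := by exact_mod_cast hT'le
              have hTc : ((T.card : ℕ) : ℝ) ≤ P := by rw [hP]; exact_mod_cast hTle
              have hkey : P * ((s : ℝ) * (P - 1) + (T'.card : ℝ) - (b : ℝ))
                  ≤ P * ((P - 1) * ((b:ℝ) - 1) * H2) := by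
                have e1 : (P - 1) * ((s:ℝ) * P + (T.card : ℝ))
                    ≤ (P - 1) * (P * ((b:ℝ) - 1) * H1) :=
                  mul_le_mul_of_nonneg_left hnumR (by linarith)
                have e2 : P * ((b:ℝ)-1) * ((P - 1) * H1)
                    = P * ((b:ℝ)-1) * ((P - 1) * H2) + P * ((b:ℝ)-1) := by
                  linear_combination (P * ((b:ℝ) - 1)) * hrec
                have e3 : P * ((T'.card : ℝ)) ≤ P * ((T.card : ℝ)) :=
                  mul_le_mul_of_nonneg_left hT'c (by linarith)
                nlinarith [e1, e2, e3, hTc]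
              exact le_of_mul_le_mul_left hkey hPpos
            · -- Maker's move did not destroy a box
              have hA'eq : A' = A := Finset.erase_eq_of_notMem hxA
              have hT'eq : T' = T := Finset.erase_eq_of_notMem (fun h => hxA (hTA h))
              rw [hA'eq, hT'eq] at hsum
              rw [hA'eq]
              have hcast : ((s'' * A.card + T''.card : ℕ) : ℝ)
                  = ((s * A.card + T.card : ℕ) : ℝ) - (b : ℝ) := by
                have h5 : ((s'' * A.card + T''.card + b : ℕ) : ℝ)
                    = ((s * A.card + T.card : ℕ) : ℝ) := by
                  exact_mod_cast congrArg (fun t : ℕ => (t : ℝ)) hsum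
                push_cast at h5 ⊢
                linarith
              rw [hcast]
              have hb0 : (0:ℝ) ≤ (b : ℝ) := by positivity
              linarith [hnum]
        exact BreakerWins.move hne (fun x hx => (key x hx).choose)
          (fun x hx => ⟨(key x hx).choose_spec.1, (key x hx).choose_spec.2.1⟩)
          (fun x hx => (key x hx).choose_spec.2.2)
      · -- BASE CASE : some box has at most b free cells, finish it
        have key : ∀ x ∈ diboard n \ (M ∪ B), ∃ Y : Finset (Fin n × Fin n),
            Y ⊆ diboard n \ (insert x M ∪ B) ∧
            Y.card = min b (diboard n \ (insert x M ∪ B)).card ∧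
            BreakerWins (diboard n) b (fun M _ => ¬ StronglyConnected M) (insert x M) (B ∪ Y) := by
          intro x hx
          obtain ⟨v, hvA, hvx⟩ := Finset.exists_mem_ne (by omega : 1 < A.card) x.1
          have hbox : Fbox n (insert x M) B v = Fbox n M B v := Fbox_maker (fun h => hvx h.symm)
          have hboxcard : (Fbox n (insert x M) B v).card ≤ b := by
            rw [hbox, hshape v hvA]
            split_ifs <;> omega
          have hsubfree : Fbox n (insert x M) B v ⊆ diboard n \ (insert x M ∪ B) :=
            Fbox_subset n _ _ v
          have hcm : (Fbox n (insert x M) B v).card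
              ≤ min b (diboard n \ (insert x M ∪ B)).card :=
            le_min hboxcard (Finset.card_le_card hsubfree)
          obtain ⟨Y, hY1, hY2, hY3⟩ := Finset.exists_subsuperset_card_eq hsubfree
            (n := min b (diboard n \ (insert x M ∪ B)).card - (Fbox n (insert x M) B v).card
              + (Fbox n (insert x M) B v).card) (by omega)
            (by
              have : min b (diboard n \ (insert x M ∪ B)).card
                  - (Fbox n (insert x M) B v).card + (Fbox n (insert x M) B v).card
                  = min b (diboard n \ (insert x M ∪ B)).card := by omega
              rw [this]
              exact min_le_right _ _)
          refine ⟨Y, hY2, by omega, ?_⟩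
          apply persist hn ((diboard n \ (insert x M ∪ (B ∪ Y))).card) _ _ le_rfl v ?_ ?_
          · intro w hw
            rcases Finset.mem_insert.mp hw with h | h
            · exact hvx (by rw [← h])
            · exact halive v hvA w h
          · intro w hwv
            by_cases hB : (v, w) ∈ B
            · exact Finset.mem_union_left _ hB
            · refine Finset.mem_union_right _ (hY1 ?_)
              simp only [Fbox, Finset.mem_filter, Finset.mem_sdiff, Finset.mem_union,
                Finset.mem_insert, not_or]
              refine ⟨⟨(mem_diboard _).mpr (fun h => hwv h.symm), ⟨?_, halive v hvA w⟩, hB⟩, trivial⟩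
              intro h
              exact hvx (by rw [← h])
        exact BreakerWins.move hne (fun x hx => (key x hx).choose)
          (fun x hx => ⟨(key x hx).choose_spec.1, (key x hx).choose_spec.2.1⟩)
          (fun x hx => (key x hx).choose_spec.2.2)


/-- For every `ε > 0` there is `n_ε` such that for all `n ≥ n_ε`, if `b ≥ (1+ε)·n / log n`
then Breaker has a winning strategy in the (1 : b) strong connectivity game on the
complete digraph on `n` vertices: Breaker can guarantee that at the end of play Maker's
digraph is not strongly connected. -/
theorem breaker_wins_strong_connectivity (ε : ℝ) (hε : 0 < ε) :
    ∃ nε : ℕ, ∀ n : ℕ, nε ≤ n → ∀ b : ℕ,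
      (1 + ε) * n / Real.log n ≤ (b : ℝ) →
      BreakerWins (diboard n) b (fun M _ => ¬ StronglyConnected M) ∅ ∅ := by
  obtain ⟨m, hm⟩ : ∃ m : ℕ, ((2 / ε) ^ 2 + 1 : ℝ) ≤ m := exists_nat_ge _
  refine ⟨max 16 m, ?_⟩
  intro n hn b hbb
  have hn16 : 16 ≤ n := le_trans (le_max_left _ _) hn
  have hnm : m ≤ n := le_trans (le_max_right _ _) hn
  have hn2 : 2 ≤ n := by omega
  have hnR : (16 : ℝ) ≤ n := by exact_mod_cast hn16
  have hnpos : (0 : ℝ) < n := by linarith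
  set R := Real.sqrt n with hRdef
  have hR0 : 0 < R := Real.sqrt_pos.mpr hnpos
  have hRsq : R * R = n := Real.mul_self_sqrt hnpos.le
  have hR4 : (4 : ℝ) ≤ R := by
    rw [hRdef, show (4:ℝ) = Real.sqrt 16 by
      rw [show (16:ℝ) = 4 ^ 2 by norm_num, Real.sqrt_sq (by norm_num)]]
    exact Real.sqrt_le_sqrt hnR
  have hRε : 2 / ε ≤ R := by
    have h1 : ((2 / ε) ^ 2 : ℝ) ≤ n := by
      have : (m : ℝ) ≤ n := by exact_mod_cast hnm
      linarith
    exact Real.le_sqrt_of_sq_le h1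
  have hlog : Real.log n ≤ 2 * R := by
    have h1 : Real.log R ≤ R - 1 := Real.log_le_sub_one_of_pos hR0
    have h2 : Real.log R = Real.log n / 2 := Real.log_sqrt hnpos.le
    linarith
  have hlogpos : 0 < Real.log n := Real.log_pos (by linarith)
  have hεR : (2 : ℝ) ≤ ε * R := by
    have := mul_le_mul_of_nonneg_left hRε hε.le
    have hne : ε ≠ 0 := ne_of_gt hε
    have h2 : ε * (2 / ε) = 2 := by field_simp
    linarith
  have hlogεn : Real.log n ≤ ε * n := by
    have h1 : 2 * R ≤ (ε * R) * R := by nlinarith [hR0]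
    nlinarith [hRsq]
  have hlogn2 : 2 * Real.log n ≤ n := by nlinarith [hR4, hR0, hRsq]
  have hblog : (1 + ε) * n ≤ b * Real.log n := by
    rw [div_le_iff₀ hlogpos] at hbb
    linarith
  have hεn : (0 : ℝ) ≤ ε * n := by positivity
  have hb2R : (2 : ℝ) ≤ b := by
    have h2 : 2 * Real.log n ≤ (b : ℝ) * Real.log n := by nlinarith
    exact le_of_mul_le_mul_right h2 hlogpos
  have hb : 2 ≤ b := by exact_mod_cast hb2R
  apply main_lemma hn2 hb ((diboard n \ (∅ ∪ ∅)).card) ∅ ∅ le_rfl Finset.univ ∅ (n - 1)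
    (Finset.empty_subset _)
  · rw [Finset.card_univ, Fintype.card_fin]; omega
  · intro v _ w h
    exact Finset.notMem_empty _ h
  · intro v _
    rw [Fbox_init]
    simp
  · rw [Finset.card_univ, Fintype.card_fin]
    simp only [Finset.card_empty, add_zero]
    obtain ⟨Hc, hHc⟩ : ∃ Hc : ℝ, ((harmonic (n - 1) : ℚ) : ℝ) = Hc := ⟨_, rfl⟩
    rw [hHc]
    have hH : Real.log n ≤ Hc := by
      rw [← hHc]
      have h1 := log_add_one_le_harmonic (n - 1)
      have he : (n - 1 + 1 : ℕ) = n := by omega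
      rw [he] at h1
      exact h1
    have hb1 : (1 : ℝ) ≤ (b : ℝ) - 1 := by linarith
    have hcast : (((n - 1) * n : ℕ) : ℝ) = ((n : ℝ) - 1) * n := by
      push_cast [Nat.cast_sub (by omega : 1 ≤ n)]
      ring
    rw [hcast]
    have key : ((n : ℝ) - 1) ≤ ((b : ℝ) - 1) * Hc := by
      have h1 : ((b : ℝ) - 1) * Real.log n ≤ ((b : ℝ) - 1) * Hc :=
        mul_le_mul_of_nonneg_left hH (by linarith)
      nlinarith [hblog, hlogεn]
    calc ((n : ℝ) - 1) * n ≤ (((b : ℝ) - 1) * Hc) * n :=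
          mul_le_mul_of_nonneg_right key hnpos.le
      _ = (n : ℝ) * ((b : ℝ) - 1) * Hc := by ring
end

section
/- For every ε > 0 there exists n_ε such that for all n ≥ n_ε: if the bias b satisfies b ≥ (1+ε)·n/log n, then Breaker has a winning strategy in the (1:b) Maker-Breaker Hamiltonicity game on the complete digraph K⃗_n, i.e. Breaker can guarantee that at the end of play the digraph on [n] formed by Maker's claimed edges contains no directed Hamilton cycle. -/
/-- A digraph on `Fin n`, given by its edge set, is Hamiltonian if it contains a directed
cycle passing through every vertex exactly once: there is a cyclic enumeration of all the
vertices all of whose consecutive pairs are edges. -/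
def IsHamiltonian {n : ℕ} (E : Finset (Fin n × Fin n)) : Prop :=
  ∃ σ : ZMod n → Fin n, Function.Bijective σ ∧ ∀ i : ZMod n, (σ i, σ (i + 1)) ∈ E

open Finset

def bnd (b m : ℕ) : ℕ := ∑ k ∈ Finset.Ico 1 m, b / k

lemma not_ham {n : ℕ} (M : Finset (Fin n × Fin n)) (v : Fin n)
    (hv : ∀ w, (v, w) ∉ M) : ¬ IsHamiltonian M := by
  rintro ⟨σ, hbij, hcyc⟩
  obtain ⟨i, rfl⟩ := hbij.2 v
  exact hv _ (hcyc i)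

lemma breaker_main {n : ℕ} (b : ℕ) :
    ∀ N (M B : Finset (Fin n × Fin n)) (A : Finset (Fin n)),
      (diboard n \ (M ∪ B)).card = N →
      A.Nonempty →
      (∀ v ∈ A, ∀ w, (v, w) ∉ M) →
      (∀ v ∈ A, ((diboard n \ (M ∪ B)).filter (fun p => p.1 = v)).card ≤ bnd b A.card) →
      BreakerWins (diboard n) b (fun M _ => ¬ IsHamiltonian M) M B := by
  intro N
  induction N using Nat.strong_induction_on with
  | _ N IH =>
  intro M B A hN hA halive hsize
  by_cases hfree : diboard n \ (M ∪ B) = ∅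
  · refine BreakerWins.terminal hfree ?_
    obtain ⟨v, hv⟩ := hA
    exact not_ham M v (halive v hv)
  · have key : ∀ x ∈ diboard n \ (M ∪ B), ∃ Y,
        Y ⊆ diboard n \ (insert x M ∪ B) ∧
        Y.card = min b (diboard n \ (insert x M ∪ B)).card ∧
        BreakerWins (diboard n) b (fun M _ => ¬ IsHamiltonian M) (insert x M) (B ∪ Y) := by
      intro x hx
      set F' : Finset (Fin n × Fin n) := diboard n \ (insert x M ∪ B) with hF'def
      have hF'erase : F' = (diboard n \ (M ∪ B)).erase x := by
        ext p
        simp only [hF'def, Finset.mem_sdiff, Finset.mem_union, Finset.mem_insert,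
          Finset.mem_erase]
        tauto
      have hF'sub : F' ⊆ diboard n \ (M ∪ B) := by
        rw [hF'erase]; exact Finset.erase_subset _ _
      -- A' is nonempty
      set A' : Finset (Fin n) := A.erase x.1 with hA'def
      have hA'ne : A'.Nonempty := by
        rw [Finset.nonempty_iff_ne_empty]
        intro hem
        have hx1A : x.1 ∈ A := by
          by_contra hx1A
          rw [hA'def, Finset.erase_eq_of_notMem hx1A] at hem
          exact (Finset.nonempty_iff_ne_empty.mp hA) hem
        have hAcard : A = {x.1} := by
          apply Finset.eq_singleton_iff_unique_mem.mpr
          refine ⟨hx1A, fun y hy => ?_⟩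
          by_contra hyx
          have : y ∈ A' := Finset.mem_erase.mpr ⟨hyx, hy⟩
          simp [hem] at this
        have h0 := hsize x.1 hx1A
        rw [hAcard] at h0
        simp only [Finset.card_singleton] at h0
        have : bnd b 1 = 0 := by simp [bnd]
        rw [this, Nat.le_zero, Finset.card_eq_zero] at h0
        have : x ∈ (diboard n \ (M ∪ B)).filter (fun p => p.1 = x.1) := by
          simp [Finset.mem_filter, hx]
        rw [h0] at this
        simp at this
      have hm' : 0 < A'.card := Finset.card_pos.mpr hA'ne
      set q : ℕ := b / A'.card with hqdef
      -- choose S v ⊆ out-star of v in F' with card = min q (star card)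
      have hSex : ∀ v : Fin n, ∃ S, S ⊆ F'.filter (fun p => p.1 = v) ∧
          S.card = min q (F'.filter (fun p => p.1 = v)).card :=
        fun v => Finset.exists_subset_card_eq (min_le_right _ _)
      choose S hS1 hS2 using hSex
      set base : Finset (Fin n × Fin n) := A'.biUnion S with hbase
      have hbaseF' : base ⊆ F' := by
        apply Finset.biUnion_subset.mpr
        intro v _
        exact (hS1 v).trans (Finset.filter_subset _ _)
      have hdisj : ∀ u ∈ A', ∀ v ∈ A', u ≠ v → Disjoint (S u) (S v) := by
        intro u _ v _ huv
        rw [Finset.disjoint_left]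
        intro p hpu hpv
        have h1 := Finset.mem_filter.mp (hS1 u hpu)
        have h2 := Finset.mem_filter.mp (hS1 v hpv)
        exact huv (h1.2 ▸ h2.2)
      have hbasecard : base.card = ∑ v ∈ A', (S v).card := Finset.card_biUnion hdisj
      have hbaseb : base.card ≤ b := by
        rw [hbasecard]
        calc ∑ v ∈ A', (S v).card ≤ ∑ _v ∈ A', q := by
              apply Finset.sum_le_sum
              intro v _
              rw [hS2 v]; exact min_le_left _ _
          _ = A'.card * q := by rw [Finset.sum_const, smul_eq_mul]
          _ ≤ b := by rw [hqdef, mul_comm]; exact Nat.div_mul_le_self b A'.card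
      have hbasemin : base.card ≤ min b F'.card :=
        le_min hbaseb (Finset.card_le_card hbaseF')
      obtain ⟨Yx, hbY, hYF, hYcard⟩ :=
        Finset.exists_subsuperset_card_eq hbaseF' hbasemin (min_le_right _ _)
      refine ⟨Yx, hYF, hYcard, ?_⟩
      -- recursive call
      have hxfree : x ∈ diboard n \ (M ∪ B) := hx
      have hlt : (diboard n \ (insert x M ∪ (B ∪ Yx))).card < N := by
        have hsub2 : diboard n \ (insert x M ∪ (B ∪ Yx)) ⊆ F' := by
          intro p hp
          simp only [hF'def, Finset.mem_sdiff, Finset.mem_union] at *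
          tauto
        calc (diboard n \ (insert x M ∪ (B ∪ Yx))).card ≤ F'.card :=
              Finset.card_le_card hsub2
          _ < N := by
              rw [hF'erase, ← hN]
              exact Finset.card_erase_lt_of_mem hxfree
      apply IH _ hlt (insert x M) (B ∪ Yx) A' rfl hA'ne
      · -- alive
        intro v hv w hw
        have hvA := Finset.mem_of_mem_erase hv
        have hvx : v ≠ x.1 := (Finset.mem_erase.mp hv).1
        rcases Finset.mem_insert.mp hw with h | h
        · exact hvx (by rw [← h])
        · exact halive v hvA w h
      · -- sizes
        intro v hv
        have hvA := Finset.mem_of_mem_erase hv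
        have hQ : bnd b A.card ≤ bnd b A'.card + q := by
          by_cases hx1 : x.1 ∈ A
          · have hcA : A.card = A'.card + 1 := by
              rw [hA'def, Finset.card_erase_of_mem hx1]
              have : 1 ≤ A.card := Finset.card_pos.mpr ⟨x.1, hx1⟩
              omega
            rw [hcA]
            rw [show bnd b (A'.card + 1) = bnd b A'.card + b / A'.card from
              Finset.sum_Ico_succ_top hm' _]
          · rw [hA'def, Finset.erase_eq_of_notMem hx1]
            exact Nat.le_add_right _ _
        have hSY : S v ⊆ Yx := (Finset.subset_biUnion_of_mem S hv).trans hbY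
        have hsub3 : (diboard n \ (insert x M ∪ (B ∪ Yx))).filter (fun p => p.1 = v) ⊆
            (F'.filter (fun p => p.1 = v)) \ S v := by
          intro p hp
          simp only [Finset.mem_filter, Finset.mem_sdiff, Finset.mem_union, hF'def] at *
          refine ⟨⟨⟨hp.1.1, fun hc => hp.1.2 (by tauto)⟩, hp.2⟩,
            fun hpS => hp.1.2 (Or.inr (Or.inr (hSY hpS)))⟩
        have hc1 : ((diboard n \ (insert x M ∪ (B ∪ Yx))).filter (fun p => p.1 = v)).card ≤
            (F'.filter (fun p => p.1 = v)).card - (S v).card := by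
          calc _ ≤ ((F'.filter (fun p => p.1 = v)) \ S v).card := Finset.card_le_card hsub3
            _ = _ := Finset.card_sdiff_of_subset (hS1 v)
        have hc2 : (F'.filter (fun p => p.1 = v)).card ≤ bnd b A.card := by
          calc (F'.filter (fun p => p.1 = v)).card
              ≤ ((diboard n \ (M ∪ B)).filter (fun p => p.1 = v)).card :=
                Finset.card_le_card (Finset.filter_subset_filter _ hF'sub)
            _ ≤ bnd b A.card := hsize v hvA
        have hmin := hS2 v
        omega
    choose Y h1 h2 h3 using key
    exact BreakerWins.move hfree Y (fun x hx => ⟨h1 x hx, h2 x hx⟩) h3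

lemma harm_log (m : ℕ) : Real.log m ≤ ∑ k ∈ Finset.Ico 1 m, (1:ℝ)/k := by
  induction m with
  | zero => simp
  | succ m ih =>
    rcases Nat.eq_zero_or_pos m with rfl | hm
    · simp
    · rw [Finset.sum_Ico_succ_top hm]
      have hm0 : (0:ℝ) < m := by exact_mod_cast hm
      have h1 : Real.log ((m:ℝ)+1) - Real.log m ≤ 1/m := by
        rw [← Real.log_div (by positivity) (by positivity)]
        have h2 := Real.log_le_sub_one_of_pos (x := ((m:ℝ)+1)/m) (by positivity)
        have h3 : ((m:ℝ)+1)/m - 1 = 1/m := by field_simp; ring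
        linarith
      have hcast : ((m+1 : ℕ):ℝ) = (m:ℝ) + 1 := by push_cast; ring
      rw [hcast]
      linarith

set_option maxHeartbeats 1000000 in
lemma numeric (ε : ℝ) (hε : 0 < ε) : ∃ nε : ℕ, ∀ n : ℕ, nε ≤ n → ∀ b : ℕ,
    (1 + ε) * n / Real.log n ≤ (b : ℝ) →
    ∃ m : ℕ, 1 ≤ m ∧ m ≤ n ∧ n - 1 ≤ bnd b m := by
  set K : ℕ := ⌈2/ε⌉₊ + 2 with hKdef
  clear_value K
  have hKge2 : 2 ≤ K := by omega
  have hKpos : (0:ℝ) < K := by exact_mod_cast Nat.lt_of_lt_of_le Nat.zero_lt_two hKge2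
  have hK2 : (2:ℝ)/ε ≤ K := by
    calc (2:ℝ)/ε ≤ ⌈2/ε⌉₊ := Nat.le_ceil _
      _ ≤ K := by exact_mod_cast (by omega : ⌈2/ε⌉₊ ≤ K)
  set c : ℝ := (1+ε/2)/(1+ε) with hcdef
  clear_value c
  have hc0 : 0 < c := by rw [hcdef]; positivity
  have h1c : 0 < 1 - c := by
    have : c < 1 := by
      rw [hcdef]
      exact (div_lt_one (by linarith)).mpr (by linarith)
    linarith
  set t : ℝ := Real.log (2*K) / (1-c) with htdef
  clear_value t
  refine ⟨max (⌈Real.exp t⌉₊ + 1) (2*K + 3), fun n hn b hb => ?_⟩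
  have hn2K : 2*K + 3 ≤ n := le_trans (le_max_right _ _) hn
  have hnr2K : (2:ℝ)*K + 3 ≤ n := by exact_mod_cast hn2K
  have hnpos : (0:ℝ) < n := by linarith
  have hnt : Real.exp t ≤ n := by
    have h1 : (⌈Real.exp t⌉₊ + 1 : ℕ) ≤ n := le_trans (le_max_left _ _) hn
    have h2 : Real.exp t ≤ (⌈Real.exp t⌉₊ : ℝ) := Nat.le_ceil _
    have h3 : ((⌈Real.exp t⌉₊ : ℕ) : ℝ) ≤ n := by exact_mod_cast Nat.le_of_succ_le h1
    linarith
  have hlogn_t : t ≤ Real.log n := (Real.le_log_iff_exp_le hnpos).mpr hnt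
  have hlogn_pos : 0 < Real.log n := Real.log_pos (by linarith)
  set m : ℕ := n / K with hmdef
  clear_value m
  have hKn : K ≤ n := by omega
  have hm1 : 1 ≤ m := by
    rw [hmdef]; exact (Nat.one_le_div_iff (by omega)).mpr hKn
  have hmn : m ≤ n := by rw [hmdef]; exact Nat.div_le_self _ _
  refine ⟨m, hm1, hmn, ?_⟩
  have hmr0 : (0:ℝ) < m := by exact_mod_cast hm1
  -- (m:ℝ) ≥ n/(2K)
  have hK1 : (1:ℝ) ≤ K := by
    exact_mod_cast Nat.one_le_of_lt hKge2
  have hmlow : (n:ℝ)/(2*K) ≤ m := by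
    have hdm := Nat.div_add_mod n K
    have hmodlt : n % K < K := Nat.mod_lt _ (by omega)
    have h4n : n < K * m + K := by rw [hmdef]; omega
    have h4 : (n:ℝ) < (K:ℝ) * m + K := by exact_mod_cast h4n
    rw [div_le_iff₀ (by positivity)]
    have hmr1 : (1:ℝ) ≤ m := by exact_mod_cast hm1
    nlinarith
  -- log m ≥ c log n
  have hlogm : c * Real.log n ≤ Real.log m := by
    have h2K1 : (1:ℝ) < 2*K := by nlinarith [hK1]
    have hlog2K : Real.log (2*K) ≤ (1-c) * Real.log n := by
      have : Real.log (2*K) = t * (1-c) := by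
        rw [htdef]; field_simp
      rw [this]
      nlinarith
    have hdivpos : (0:ℝ) < n/(2*K) := by positivity
    have h7 : Real.log (n/(2*K)) ≤ Real.log m := Real.log_le_log hdivpos hmlow
    rw [Real.log_div (by positivity) (by positivity)] at h7
    linarith
  -- real bound on bnd
  have hcast : (bnd b m : ℝ) = ∑ k ∈ Finset.Ico 1 m, ((b/k : ℕ) : ℝ) := by
    rw [bnd]; push_cast; ring
  have hstep : ∀ k ∈ Finset.Ico 1 m, (b:ℝ)/k - 1 ≤ ((b/k : ℕ) : ℝ) := by
    intro k hk
    have hk1 : 1 ≤ k := (Finset.mem_Ico.mp hk).1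
    have hkr : (0:ℝ) < k := by exact_mod_cast hk1
    have hdm := Nat.div_add_mod b k
    have hmodlt : b % k < k := Nat.mod_lt _ (by omega)
    have h5 : ((k * (b/k) + b % k : ℕ) : ℝ) = b := by exact_mod_cast hdm
    push_cast at h5
    have h6 : ((b % k : ℕ) : ℝ) < k := by exact_mod_cast hmodlt
    have h8 : (b:ℝ) < k * ((b/k : ℕ) : ℝ) + k := by linarith
    rw [sub_le_iff_le_add, div_le_iff₀ hkr]
    linarith [h8]
  have hsum1 : ∑ k ∈ Finset.Ico 1 m, ((b:ℝ)/k - 1) ≤ (bnd b m : ℝ) := by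
    rw [hcast]
    exact Finset.sum_le_sum hstep
  have hcard1 : ∑ _k ∈ Finset.Ico 1 m, (1:ℝ) = (m:ℝ) - 1 := by
    rw [Finset.sum_const, Nat.card_Ico, nsmul_eq_mul, mul_one, Nat.cast_sub hm1,
      Nat.cast_one]
  have hsum2 : ∑ k ∈ Finset.Ico 1 m, ((b:ℝ)/k - 1)
      = (b:ℝ) * (∑ k ∈ Finset.Ico 1 m, (1:ℝ)/k) - ((m:ℝ) - 1) := by
    rw [Finset.sum_sub_distrib, Finset.mul_sum, hcard1]
    congr 1
    apply Finset.sum_congr rfl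
    intro k _
    ring
  have hb0 : (0:ℝ) ≤ b := Nat.cast_nonneg _
  have hH : c * Real.log n ≤ ∑ k ∈ Finset.Ico 1 m, (1:ℝ)/k :=
    le_trans hlogm (harm_log m)
  have hbH : (b:ℝ) * (c * Real.log n) ≤ (b:ℝ) * ∑ k ∈ Finset.Ico 1 m, (1:ℝ)/k :=
    mul_le_mul_of_nonneg_left hH hb0
  have hbc : (1+ε/2) * n ≤ (b:ℝ) * (c * Real.log n) := by
    have h9 : ((1+ε) * n / Real.log n) * (c * Real.log n) ≤ (b:ℝ) * (c * Real.log n) :=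
      mul_le_mul_of_nonneg_right hb (by positivity)
    have h10 : ((1+ε) * n / Real.log n) * (c * Real.log n) = (1+ε) * c * n := by
      field_simp
    have h11 : (1+ε) * c = 1+ε/2 := by
      rw [hcdef]
      field_simp
    rw [h10, h11] at h9
    linarith
  have hmsmall : (m:ℝ) ≤ (ε/2) * n := by
    have h12 : (m:ℝ) ≤ (n:ℝ)/K := by rw [hmdef]; exact Nat.cast_div_le
    have h13 : (n:ℝ)/K ≤ (ε/2) * n := by
      rw [div_le_iff₀ hKpos]
      have : (2:ℝ) ≤ ε * K := by
        rw [div_le_iff₀ hε] at hK2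
        linarith
      nlinarith
    linarith
  have hfinal : (n:ℝ) ≤ (bnd b m : ℝ) := by
    have hexp : (1+ε/2)*(n:ℝ) = n + (ε/2) * n := by ring
    linarith [hsum1, hsum2, hbH, hbc, hmsmall, hexp]
  have : n ≤ bnd b m := by exact_mod_cast hfinal
  omega

/-- For every `ε > 0` there is `n_ε` such that for all `n ≥ n_ε`, if `b ≥ (1+ε)·n / log n`
then Breaker has a winning strategy in the (1 : b) Hamiltonicity game on the complete
digraph on `n` vertices: Breaker can guarantee that at the end of play Maker's digraph
contains no directed Hamilton cycle. -/
theorem breaker_wins_hamiltonicity (ε : ℝ) (hε : 0 < ε) :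
    ∃ nε : ℕ, ∀ n : ℕ, nε ≤ n → ∀ b : ℕ,
      (1 + ε) * n / Real.log n ≤ (b : ℝ) →
      BreakerWins (diboard n) b (fun M _ => ¬ IsHamiltonian M) ∅ ∅ := by
  obtain ⟨nε, hnum⟩ := numeric ε hε
  refine ⟨max nε 3, fun n hn b hb => ?_⟩
  obtain ⟨m, hm1, hmn, hbnd⟩ := hnum n (le_trans (le_max_left _ _) hn) b hb
  obtain ⟨A, hAsub, hAcard⟩ := Finset.exists_subset_card_eq
    (show m ≤ (Finset.univ : Finset (Fin n)).card by simpa using hmn)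
  apply breaker_main b _ ∅ ∅ A rfl
  · rw [← Finset.card_pos, hAcard]; exact hm1
  · intro v _ w hw
    simp at hw
  · intro v hv
    rw [hAcard]
    refine le_trans ?_ hbnd
    have hsub : (diboard n \ (∅ ∪ ∅)).filter (fun p => p.1 = v) ⊆
        (Finset.univ.erase v).image (fun w => (v, w)) := by
      intro p hp
      simp only [Finset.empty_union, Finset.sdiff_empty, Finset.mem_filter, diboard,
        Finset.mem_image, Finset.mem_erase, Finset.mem_univ, and_true] at hp ⊢
      refine ⟨p.2, ?_, ?_⟩
      · rw [← hp.2]; exact fun h => hp.1.2 (hp.2 ▸ h.symm) |>.elim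
      · rw [← hp.2]
    calc ((diboard n \ (∅ ∪ ∅)).filter (fun p => p.1 = v)).card
        ≤ ((Finset.univ.erase v).image (fun w => (v, w))).card := Finset.card_le_card hsub
      _ ≤ (Finset.univ.erase v).card := Finset.card_image_le
      _ = n - 1 := by rw [Finset.card_erase_of_mem (Finset.mem_univ v)]; simp
end

section
/- For every ε > 0 there exists n_ε such that for all n ≥ n_ε: if the bias b satisfies b ≥ (1+ε)·n/log n, then in the (1:b) Maker-Breaker game on the edge set of the complete digraph K⃗_n, Breaker has a strategy guaranteeing that at the end of play there is a vertex v ∈ [n] such that Breaker has claimed all n−1 edges (v,u) with u ≠ v; in particular, Maker's final digraph has a vertex of out-degree 0. -/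
namespace BreakerAux

open Finset

abbrev E (n : ℕ) := Fin n × Fin n

def Pred (n : ℕ) : Finset (E n) → Finset (E n) → Prop := fun M B =>
  ∃ v : Fin n, (∀ u : Fin n, u ≠ v → (v, u) ∈ B) ∧ (∀ u : Fin n, (v, u) ∉ M)

def outFree (n : ℕ) (B : Finset (E n)) (v : Fin n) : Finset (E n) :=
  (diboard n).filter (fun e => e.1 = v ∧ e ∉ B)

def rB (n : ℕ) (B : Finset (E n)) (v : Fin n) : ℕ := (outFree n B v).card

variable {n : ℕ}

lemma mem_outFree {B : Finset (E n)} {v : Fin n} {e : E n} :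
    e ∈ outFree n B v ↔ e.1 = v ∧ e.2 ≠ v ∧ e ∉ B := by
  unfold outFree diboard
  simp only [mem_filter, mem_univ, true_and]
  constructor
  · rintro ⟨h1, h2, h3⟩
    exact ⟨h2, by rw [← h2]; exact fun h => h1 h.symm, h3⟩
  · rintro ⟨h1, h2, h3⟩
    exact ⟨by rw [h1]; exact fun h => h2 h.symm, h1, h3⟩

lemma outFree_insert (B : Finset (E n)) (e : E n) (v : Fin n) :
    outFree n (insert e B) v = (outFree n B v).erase e := by
  ext a
  simp only [mem_outFree, Finset.mem_erase, Finset.mem_insert]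
  tauto

lemma outFree_disj {B : Finset (E n)} {v w : Fin n} (hvw : v ≠ w) :
    Disjoint (outFree n B v) (outFree n B w) := by
  rw [Finset.disjoint_left]
  intro a hv hw
  exact hvw ((mem_outFree.mp hv).1 ▸ (mem_outFree.mp hw).1 ▸ rfl)

lemma card_biUnion_outFree (A : Finset (Fin n)) (B : Finset (E n)) :
    (A.biUnion (fun v => outFree n B v)).card = ∑ v ∈ A, rB n B v :=
  Finset.card_biUnion (fun v _ w _ hvw => outFree_disj hvw)

/-- Balanced selection lemma: remove `k` elements from the boxes, keeping balance. -/
lemma select (n : ℕ) : ∀ (k : ℕ) (A : Finset (Fin n)) (B : Finset (E n)),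
    (∀ v ∈ A, ∀ w ∈ A, rB n B v ≤ rB n B w + 1) →
    k ≤ ∑ v ∈ A, rB n B v →
    ∃ Y : Finset (E n), Y ⊆ A.biUnion (fun v => outFree n B v) ∧ Y.card = k ∧
      (∀ v ∈ A, ∀ w ∈ A, rB n (B ∪ Y) v ≤ rB n (B ∪ Y) w + 1) ∧
      (∑ v ∈ A, rB n (B ∪ Y) v) + k = ∑ v ∈ A, rB n B v := by
  intro k
  induction k with
  | zero =>
    intro A B hbal hk
    exact ⟨∅, by simp, by simp, by simpa using hbal, by simp⟩
  | succ k ih =>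
    intro A B hbal hk
    have hA : A.Nonempty := by
      rcases Finset.eq_empty_or_nonempty A with h | h
      · subst h; simp at hk
      · exact h
    obtain ⟨v0, hv0, hmax⟩ := A.exists_max_image (rB n B) hA
    have hr0 : 1 ≤ rB n B v0 := by
      by_contra h
      have h0 : ∀ v ∈ A, rB n B v = 0 := fun v hv => by have := hmax v hv; omega
      have : ∑ v ∈ A, rB n B v = 0 := Finset.sum_eq_zero h0
      omega
    obtain ⟨e, he⟩ := Finset.card_pos.mp (show 0 < (outFree n B v0).card from hr0)
    have hout : ∀ w, outFree n (insert e B) w = (outFree n B w).erase e :=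
      outFree_insert B e
    have hrv0 : rB n (insert e B) v0 = rB n B v0 - 1 := by
      rw [rB, hout, Finset.card_erase_of_mem he]; rfl
    have hrother : ∀ w, w ≠ v0 → rB n (insert e B) w = rB n B w := by
      intro w hw
      have hne : e ∉ outFree n B w := fun hmem =>
        hw (((mem_outFree.mp hmem).1).symm.trans (mem_outFree.mp he).1)
      rw [rB, hout, Finset.erase_eq_of_notMem hne]; rfl
    have hrle : ∀ w, rB n (insert e B) w ≤ rB n B w := by
      intro w
      by_cases hw : w = v0
      · subst hw; omega
      · rw [hrother w hw]
    have hbal' : ∀ v ∈ A, ∀ w ∈ A, rB n (insert e B) v ≤ rB n (insert e B) w + 1 := by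
      intro v hv w hw
      by_cases hwv : w = v0
      · subst hwv
        have h1 := hrle v
        have h2 := hmax v hv
        omega
      · rw [hrother w hwv]
        have h1 := hrle v
        have h2 := hbal v hv w hw
        omega
    have hsum' : (∑ v ∈ A, rB n (insert e B) v) + 1 = ∑ v ∈ A, rB n B v := by
      rw [← Finset.sum_erase_add A _ hv0, ← Finset.sum_erase_add A (rB n B) hv0]
      have hcong : ∑ v ∈ A.erase v0, rB n (insert e B) v = ∑ v ∈ A.erase v0, rB n B v :=
        Finset.sum_congr rfl (fun v hv => hrother v (Finset.ne_of_mem_erase hv))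
      rw [hcong]
      omega
    obtain ⟨Y', hY'sub, hY'card, hY'bal, hY'sum⟩ := ih A (insert e B) hbal' (by omega)
    have heY' : e ∉ Y' := by
      intro hmem
      obtain ⟨w, hw, hmem⟩ := Finset.mem_biUnion.mp (hY'sub hmem)
      rw [hout w] at hmem
      exact (Finset.ne_of_mem_erase hmem) rfl
    have huni : B ∪ insert e Y' = insert e B ∪ Y' := by
      ext a
      simp only [Finset.mem_union, Finset.mem_insert]
      tauto
    refine ⟨insert e Y', ?_, ?_, ?_, ?_⟩
    · intro a ha
      rcases Finset.mem_insert.mp ha with rfl | ha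
      · exact Finset.mem_biUnion.mpr ⟨v0, hv0, he⟩
      · obtain ⟨w, hw, hmem⟩ := Finset.mem_biUnion.mp (hY'sub ha)
        rw [hout w] at hmem
        exact Finset.mem_biUnion.mpr ⟨w, hw, Finset.mem_of_mem_erase hmem⟩
    · rw [Finset.card_insert_of_notMem heY', hY'card]
    · intro v hv w hw
      rw [huni]
      exact hY'bal v hv w hw
    · have hcong : ∑ v ∈ A, rB n (B ∪ insert e Y') v = ∑ v ∈ A, rB n (insert e B ∪ Y') v :=
        Finset.sum_congr rfl (fun v _ => by rw [huni])
      rw [hcong]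
      omega

lemma outFree_subset_free {M B : Finset (E n)} {v : Fin n}
    (hM : ∀ u : Fin n, (v, u) ∉ M) :
    outFree n B v ⊆ (diboard n) \ (M ∪ B) := by
  intro e he
  obtain ⟨h1, h2, h3⟩ := mem_outFree.mp he
  have hboard : e ∈ diboard n := Finset.mem_of_mem_filter e he
  have heq : (v, e.2) = e := by rw [← h1]
  refine Finset.mem_sdiff.mpr ⟨hboard, ?_⟩
  rw [Finset.mem_union]
  push_neg
  exact ⟨by rw [← heq]; exact hM e.2, h3⟩

lemma free_card_step {M B Y : Finset (E n)} {x : E n}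
    (hx : x ∈ (diboard n) \ (M ∪ B)) :
    ((diboard n) \ (insert x M ∪ (B ∪ Y))).card + 1 ≤ ((diboard n) \ (M ∪ B)).card := by
  have hsub : (diboard n) \ (insert x M ∪ (B ∪ Y)) ⊆ ((diboard n) \ (M ∪ B)).erase x := by
    intro a ha
    simp only [Finset.mem_sdiff, Finset.mem_union, Finset.mem_insert, not_or,
      Finset.mem_erase] at ha ⊢
    tauto
  have h1 := Finset.card_le_card hsub
  rw [Finset.card_erase_of_mem hx] at h1
  have hpos : 0 < ((diboard n) \ (M ∪ B)).card := Finset.card_pos.mpr ⟨x, hx⟩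
  omega

/-- Endgame: once Breaker owns a full out-star of an M-untouched vertex, he wins by playing
arbitrarily. -/
lemma endgame (n b : ℕ) (v : Fin n) :
    ∀ (N : ℕ) (M B : Finset (E n)), ((diboard n) \ (M ∪ B)).card ≤ N →
    (∀ u : Fin n, u ≠ v → (v, u) ∈ B) → (∀ u : Fin n, (v, u) ∉ M) →
    BreakerWins (diboard n) b (Pred n) M B := by
  intro N
  induction N with
  | zero =>
    intro M B hcard hB hM
    exact .terminal (Finset.card_eq_zero.mp (Nat.le_zero.mp hcard)) ⟨v, hB, hM⟩
  | succ N ih =>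
    intro M B hcard hB hM
    by_cases hend : (diboard n) \ (M ∪ B) = ∅
    · exact .terminal hend ⟨v, hB, hM⟩
    · have key : ∀ x, x ∈ (diboard n) \ (M ∪ B) → ∃ Y : Finset (E n),
          (Y ⊆ (diboard n) \ (insert x M ∪ B) ∧
            Y.card = min b ((diboard n) \ (insert x M ∪ B)).card) ∧
          BreakerWins (diboard n) b (Pred n) (insert x M) (B ∪ Y) := by
        intro x hx
        obtain ⟨Y, hYsub, hYcard⟩ := Finset.exists_subset_card_eq
          (min_le_right b ((diboard n) \ (insert x M ∪ B)).card)
        refine ⟨Y, ⟨hYsub, hYcard⟩, ih (insert x M) (B ∪ Y) ?_ ?_ ?_⟩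
        · have := free_card_step (Y := Y) hx
          omega
        · intro u hu
          exact Finset.mem_union_left _ (hB u hu)
        · intro u
          simp only [Finset.mem_insert, not_or]
          refine ⟨?_, hM u⟩
          intro h
          rw [← h] at hx
          obtain ⟨hb1, hb2⟩ := Finset.mem_sdiff.mp hx
          by_cases huv : u = v
          · subst huv
            have : (u, u).1 ≠ (u, u).2 := (Finset.mem_filter.mp hb1).2
            exact this rfl
          · rw [Finset.mem_union] at hb2
            push_neg at hb2
            exact hb2.2 (hB u huv)
      exact .move hend (fun x hx => (key x hx).choose)
        (fun x hx => (key x hx).choose_spec.1)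
        (fun x hx => (key x hx).choose_spec.2)

lemma zeroWin (n b : ℕ) (v : Fin n) (M B : Finset (E n))
    (hM : ∀ u : Fin n, (v, u) ∉ M) (hr : rB n B v = 0) :
    BreakerWins (diboard n) b (Pred n) M B := by
  apply endgame n b v ((diboard n \ (M ∪ B)).card) M B le_rfl ?_ hM
  intro u hu
  by_contra hBm
  have hmem : (v, u) ∈ outFree n B v := mem_outFree.mpr ⟨rfl, hu, hBm⟩
  rw [Finset.card_eq_zero.mp hr] at hmem
  exact absurd hmem (Finset.notMem_empty _)

noncomputable def Hs : ℕ → ℝ := fun k => ∑ i ∈ Finset.range k, (1 : ℝ)/(i+1)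

lemma Hs_nonneg (k : ℕ) : 0 ≤ Hs k :=
  Finset.sum_nonneg (fun i _ => by positivity)

lemma Hs_succ (k : ℕ) : Hs (k+1) = Hs k + 1/(k+1) := Finset.sum_range_succ _ k

lemma log_le_Hs : ∀ m : ℕ, Real.log (m+1) ≤ Hs m := by
  intro m
  induction m with
  | zero => simp [Hs]
  | succ m ih =>
    have h1 : (0:ℝ) < (m:ℝ)+1 := by positivity
    have h2 : (0:ℝ) < (m:ℝ)+2 := by positivity
    have hsplit : Real.log ((m:ℝ)+1+1) = Real.log ((m:ℝ)+1) + Real.log (((m:ℝ)+2)/((m:ℝ)+1)) := by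
      rw [← Real.log_mul (by positivity) (by positivity)]
      congr 1
      field_simp
      ring
    have h3 : Real.log (((m:ℝ)+2)/((m:ℝ)+1)) ≤ 1/((m:ℝ)+1) := by
      have h4 := Real.log_le_sub_one_of_pos (show (0:ℝ) < ((m:ℝ)+2)/((m:ℝ)+1) by positivity)
      have h5 : ((m:ℝ)+2)/((m:ℝ)+1) - 1 = 1/((m:ℝ)+1) := by
        field_simp
        norm_num
      linarith
    rw [Hs_succ]
    push_cast
    push_cast at ih hsplit
    linarith

lemma rB_le_add_one_of_sub {A' A : Finset (Fin n)} {B : Finset (E n)}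
    (hsub : A' ⊆ A) (hbal : ∀ v ∈ A, ∀ w ∈ A, rB n B v ≤ rB n B w + 1) :
    ∀ v ∈ A', ∀ w ∈ A', rB n B v ≤ rB n B w + 1 :=
  fun v hv w hw => hbal v (hsub hv) w (hsub hw)

/-- The main strategy lemma. -/
lemma main (n b : ℕ) (hb : 1 ≤ b) :
    ∀ (N : ℕ) (M B : Finset (E n)) (A : Finset (Fin n)),
    ((diboard n) \ (M ∪ B)).card ≤ N →
    2 ≤ A.card →
    (∀ v ∈ A, ∀ u : Fin n, (v, u) ∉ M) →
    (∀ v ∈ A, ∀ w ∈ A, rB n B v ≤ rB n B w + 1) →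
    ((∑ v ∈ A, rB n B v : ℕ) : ℝ) ≤ (A.card : ℝ) * ((b:ℝ) - 1) * Hs (A.card - 1) →
    BreakerWins (diboard n) b (Pred n) M B := by
  intro N
  induction N with
  | zero =>
    intro M B A hcard hA2 hM hbal hc
    obtain ⟨v0, hv0⟩ := Finset.card_pos.mp (show 0 < A.card by omega)
    refine zeroWin n b v0 M B (hM v0 hv0) ?_
    have hfree : (diboard n) \ (M ∪ B) = ∅ := Finset.card_eq_zero.mp (Nat.le_zero.mp hcard)
    have hsub := outFree_subset_free (B := B) (hM v0 hv0)
    rw [hfree, Finset.subset_empty] at hsub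
    rw [rB, hsub, Finset.card_empty]
  | succ N ih =>
    intro M B A hcard hA2 hM hbal hc
    by_cases hzero : ∃ v ∈ A, rB n B v = 0
    · obtain ⟨v, hv, hr⟩ := hzero
      exact zeroWin n b v M B (hM v hv) hr
    push_neg at hzero
    obtain ⟨v0, hv0⟩ := Finset.card_pos.mp (show 0 < A.card by omega)
    have hfree : ∃ e, e ∈ (diboard n) \ (M ∪ B) := by
      have h1 : 0 < rB n B v0 := Nat.pos_of_ne_zero (hzero v0 hv0)
      obtain ⟨e, he⟩ := Finset.card_pos.mp h1
      exact ⟨e, outFree_subset_free (hM v0 hv0) he⟩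
    have hne : (diboard n) \ (M ∪ B) ≠ ∅ := by
      obtain ⟨e, he⟩ := hfree
      intro h
      rw [h] at he
      exact absurd he (Finset.notMem_empty _)
    have key : ∀ x, x ∈ (diboard n) \ (M ∪ B) → ∃ Y : Finset (E n),
        (Y ⊆ (diboard n) \ (insert x M ∪ B) ∧
          Y.card = min b ((diboard n) \ (insert x M ∪ B)).card) ∧
        BreakerWins (diboard n) b (Pred n) (insert x M) (B ∪ Y) := by
      intro x hx
      set A' := A.erase x.1 with hA'
      set F2 := (diboard n) \ (insert x M ∪ B) with hF2
      have hA'sub : A' ⊆ A := Finset.erase_subset _ _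
      have hMx : ∀ v ∈ A', ∀ u : Fin n, (v, u) ∉ insert x M := by
        intro v hv u
        simp only [Finset.mem_insert, not_or]
        refine ⟨?_, hM v (hA'sub hv) u⟩
        intro h
        exact (Finset.ne_of_mem_erase hv) (by rw [← h])
      have hsubF2 : ∀ v ∈ A', outFree n B v ⊆ F2 := by
        intro v hv e he
        obtain ⟨h1, h2, h3⟩ := mem_outFree.mp he
        have hboard : e ∈ diboard n := Finset.mem_of_mem_filter e he
        have heq : (v, e.2) = e := by rw [← h1]
        refine Finset.mem_sdiff.mpr ⟨hboard, ?_⟩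
        rw [Finset.mem_union]
        push_neg
        exact ⟨by rw [← heq]; exact hMx v hv e.2, h3⟩
      have hA'1 : 1 ≤ A'.card := by
        have h := Finset.pred_card_le_card_erase (s := A) (a := x.1)
        rw [← hA'] at h
        omega
      -- the key potential estimate
      have hCC : ((∑ v ∈ A', rB n B v : ℕ) : ℝ) ≤
          (A'.card : ℝ) * ((b:ℝ) - 1) * Hs (A'.card - 1) + b := by
        by_cases hxA : x.1 ∈ A
        · have hcardA' : A'.card = A.card - 1 := Finset.card_erase_of_mem hxA
          have hq1 : 1 ≤ A'.card := hA'1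
          have hpq : (A.card : ℝ) = (A'.card : ℝ) + 1 := by
            have : A.card = A'.card + 1 := by omega
            exact_mod_cast this
          have hsplit : (∑ v ∈ A', rB n B v) + rB n B x.1 = ∑ v ∈ A, rB n B v :=
            Finset.sum_erase_add A _ hxA
          have hbound : ∑ v ∈ A, rB n B v ≤ A.card * (rB n B x.1 + 1) := by
            calc ∑ v ∈ A, rB n B v ≤ ∑ _v ∈ A, (rB n B x.1 + 1) :=
                  Finset.sum_le_sum (fun v hv => hbal v hv x.1 hxA)
            _ = A.card * (rB n B x.1 + 1) := by rw [Finset.sum_const, smul_eq_mul]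
          have hHq : Hs A'.card = Hs (A'.card - 1) + 1/(A'.card : ℝ) := by
            have h0 : A'.card - 1 + 1 = A'.card := by omega
            have h1 : Hs A'.card = Hs (A'.card - 1 + 1) := by rw [h0]
            rw [h1, Hs_succ]
            congr 2
            push_cast [h0]
            have : ((A'.card - 1 : ℕ) : ℝ) = (A'.card : ℝ) - 1 := by
              push_cast [Nat.cast_sub hq1]
              ring
            rw [this]
            ring
          -- real abbreviations
          set Q : ℝ := (A'.card : ℝ) with hQ
          have hQ1 : (1:ℝ) ≤ Q := by rw [hQ]; exact_mod_cast hq1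
          have hQ0 : (0:ℝ) < Q := by linarith
          set S : ℝ := ((∑ v ∈ A, rB n B v : ℕ) : ℝ) with hS
          set S' : ℝ := ((∑ v ∈ A', rB n B v : ℕ) : ℝ) with hS'
          set r0 : ℝ := ((rB n B x.1 : ℕ) : ℝ) with hr0
          have hsplitR : S' + r0 = S := by
            rw [hS, hS', hr0, ← hsplit]
            push_cast
            ring
          have hboundR : S ≤ (Q + 1) * (r0 + 1) := by
            rw [hS, hr0, ← hpq]
            exact_mod_cast hbound
          have hcR : S ≤ (Q + 1) * ((b:ℝ) - 1) * Hs (A.card - 1) := by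
            rw [hS, ← hpq]
            exact hc
          have hHcards : A.card - 1 = A'.card := by omega
          rw [hHcards] at hcR
          have hbpos : (0:ℝ) ≤ (b:ℝ) - 1 := by
            have : (1:ℝ) ≤ (b:ℝ) := by exact_mod_cast hb
            linarith
          have hHnn : 0 ≤ Hs (A'.card - 1) := Hs_nonneg _
          have he1 : Q * Hs A'.card = Q * Hs (A'.card - 1) + 1 := by
            rw [hHq]
            field_simp
          -- goal : S' ≤ Q * ((b:ℝ)-1) * Hs (A'.card-1) + b
          show S' ≤ Q * ((b:ℝ) - 1) * Hs (A'.card - 1) + (b:ℝ)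
          have hmul : (Q + 1) * S' ≤ (Q + 1) * (Q * ((b:ℝ) - 1) * Hs (A'.card - 1) + (b:ℝ)) := by
            have h2 : Q * S ≤ Q * ((Q + 1) * ((b:ℝ) - 1) * Hs A'.card) :=
              mul_le_mul_of_nonneg_left hcR (le_of_lt hQ0)
            have h3 : Q * ((Q + 1) * ((b:ℝ) - 1) * Hs A'.card) =
                (Q + 1) * ((b:ℝ) - 1) * (Q * Hs A'.card) := by ring
            rw [h3, he1] at h2
            nlinarith [hboundR, hsplitR, h2]
          exact le_of_mul_le_mul_left hmul (by linarith)
        · have hAA : A' = A := Finset.erase_eq_of_notMem hxA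
          rw [hAA]
          have hb0 : (0:ℝ) ≤ (b:ℝ) := by positivity
          linarith [hc]
      by_cases hwin : ∃ w ∈ A', rB n B w ≤ b
      · -- Breaker completes the small box and wins via the endgame
        obtain ⟨w, hw, hrw⟩ := hwin
        have hsub : outFree n B w ⊆ F2 := hsubF2 w hw
        have hle1 : rB n B w ≤ min b F2.card :=
          le_min hrw (le_trans (Finset.card_le_card hsub) le_rfl)
        obtain ⟨Y, hsubY, hYF2, hYcard⟩ :=
          Finset.exists_subsuperset_card_eq hsub hle1 (min_le_right b F2.card)
        refine ⟨Y, ⟨hYF2, hYcard⟩, ?_⟩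
        apply endgame n b w (((diboard n) \ (insert x M ∪ (B ∪ Y))).card)
          (insert x M) (B ∪ Y) le_rfl ?_ (hMx w hw)
        intro u hu
        by_cases hB : (w, u) ∈ B
        · exact Finset.mem_union_left _ hB
        · exact Finset.mem_union_right _ (hsubY (mem_outFree.mpr ⟨rfl, hu, hB⟩))
      · -- Breaker balances
        push_neg at hwin
        have hA'2 : 2 ≤ A'.card := by
          by_contra h
          have h1 : A'.card = 1 := by omega
          obtain ⟨w, hw⟩ := Finset.card_eq_one.mp h1
          have hsum1 : ∑ v ∈ A', rB n B v = rB n B w := by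
            rw [hw, Finset.sum_singleton]
          have h2 := hwin w (by rw [hw]; exact Finset.mem_singleton_self w)
          rw [h1, hsum1] at hCC
          have h3 : Hs (1 - 1) = 0 := by simp [Hs]
          rw [h3] at hCC
          have h4 : ((rB n B w : ℕ) : ℝ) ≤ (b:ℝ) := by
            push_cast at hCC
            linarith
          have h5 : rB n B w ≤ b := by exact_mod_cast h4
          omega
        have hS'b : b ≤ ∑ v ∈ A', rB n B v := by
          obtain ⟨w, hw⟩ := Finset.card_pos.mp (show 0 < A'.card by omega)
          calc b ≤ rB n B w := le_of_lt (hwin w hw)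
          _ ≤ ∑ v ∈ A', rB n B v :=
              Finset.single_le_sum (fun _ _ => Nat.zero_le _) hw
        obtain ⟨Y, hYsub, hYcard, hYbal, hYsum⟩ :=
          select n b A' B (rB_le_add_one_of_sub hA'sub hbal) hS'b
        have hbiU : A'.biUnion (fun v => outFree n B v) ⊆ F2 :=
          Finset.biUnion_subset.mpr hsubF2
        have hYF2 : Y ⊆ F2 := hYsub.trans hbiU
        have hF2card : b ≤ F2.card := by
          have h1 := card_biUnion_outFree A' B
          have h2 := Finset.card_le_card hbiU
          omega
        have hYcard' : Y.card = min b F2.card := by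
          rw [hYcard, min_eq_left hF2card]
        refine ⟨Y, ⟨hYF2, hYcard'⟩, ?_⟩
        apply ih (insert x M) (B ∪ Y) A' ?_ hA'2 hMx hYbal ?_
        · have := free_card_step (Y := Y) hx
          omega
        · have hcast : ((∑ v ∈ A', rB n (B ∪ Y) v : ℕ) : ℝ) =
              ((∑ v ∈ A', rB n B v : ℕ) : ℝ) - (b : ℝ) := by
            have := hYsum
            push_cast [← this]
            ring
          rw [hcast]
          linarith [hCC]
    exact .move hne (fun x hx => (key x hx).choose)
      (fun x hx => (key x hx).choose_spec.1)
      (fun x hx => (key x hx).choose_spec.2)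

lemma rB_empty (v : Fin n) : rB n (∅ : Finset (E n)) v = n - 1 := by
  have h : outFree n (∅ : Finset (E n)) v = {v} ×ˢ (Finset.univ.erase v) := by
    ext e
    simp only [mem_outFree, Finset.mem_product, Finset.mem_singleton, Finset.mem_erase,
      Finset.mem_univ, and_true, Finset.notMem_empty, not_false_iff]
  rw [rB, h, Finset.card_product, Finset.card_singleton,
    Finset.card_erase_of_mem (Finset.mem_univ v), Finset.card_univ, Fintype.card_fin, one_mul]

end BreakerAux

open BreakerAux in
/-- For every `ε > 0` there is `n_ε` such that for all `n ≥ n_ε`, if `b ≥ (1+ε)·n / log n`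
then in the (1 : b) Maker-Breaker game on the complete digraph on `n` vertices, Breaker
has a strategy guaranteeing that at the end of play there is a vertex `v` such that
Breaker has claimed all `n − 1` edges `(v, u)` with `u ≠ v`; in particular Maker's final
digraph has a vertex of out-degree `0`. -/
theorem breaker_claims_all_out_edges (ε : ℝ) (hε : 0 < ε) :
    ∃ nε : ℕ, ∀ n : ℕ, nε ≤ n → ∀ b : ℕ,
      (1 + ε) * n / Real.log n ≤ (b : ℝ) →
      BreakerWins (diboard n) b
        (fun M B => ∃ v : Fin n,
          (∀ u : Fin n, u ≠ v → (v, u) ∈ B) ∧ (∀ u : Fin n, (v, u) ∉ M)) ∅ ∅ := by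
  refine ⟨max 3 (Nat.ceil ((2/ε)^2)), fun n hn b hb => ?_⟩
  have hn3 : 3 ≤ n := le_trans (le_max_left _ _) hn
  have hnR : (3:ℝ) ≤ (n:ℝ) := by exact_mod_cast hn3
  have hnc : ((2/ε)^2 : ℝ) ≤ (n:ℝ) := by
    have h1 : Nat.ceil ((2/ε)^2) ≤ n := le_trans (le_max_right _ _) hn
    calc ((2/ε)^2 : ℝ) ≤ (Nat.ceil ((2/ε)^2) : ℝ) := Nat.le_ceil _
    _ ≤ (n:ℝ) := by exact_mod_cast h1
  have hlogpos : 0 < Real.log n := Real.log_pos (by linarith)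
  have hb1 : 1 ≤ b := by
    by_contra h
    have hb0 : (b:ℝ) = 0 := by
      have : b = 0 := by omega
      rw [this]; norm_num
    rw [hb0] at hb
    have hpos : 0 < (1 + ε) * n / Real.log n := by positivity
    linarith
  -- log n ≤ ε n
  have hsq : (2/ε : ℝ) ≤ Real.sqrt n := by
    rw [Real.le_sqrt (by positivity) (by linarith)]
    exact hnc
  have hsqpos : (0:ℝ) < Real.sqrt n := Real.sqrt_pos.mpr (by linarith)
  have hlog2s : Real.log n ≤ 2 * Real.sqrt n := by
    have h1 : Real.log (Real.sqrt n) ≤ Real.sqrt n - 1 :=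
      Real.log_le_sub_one_of_pos hsqpos
    have h2 : Real.log (Real.sqrt n) = Real.log n / 2 := Real.log_sqrt (by linarith)
    linarith
  have hlogeps : Real.log n ≤ ε * n := by
    have h5 : 2 ≤ ε * Real.sqrt n := by
      have h6 := mul_le_mul_of_nonneg_left hsq (le_of_lt hε)
      rw [mul_div_cancel₀ (2:ℝ) (ne_of_gt hε)] at h6
      exact h6
    have h7 : 2 * Real.sqrt n ≤ (ε * Real.sqrt n) * Real.sqrt n :=
      mul_le_mul_of_nonneg_right h5 (le_of_lt hsqpos)
    have h8 : (ε * Real.sqrt n) * Real.sqrt n = ε * n := by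
      rw [mul_assoc, Real.mul_self_sqrt (by linarith)]
    linarith
  have hH : Real.log n ≤ Hs (n-1) := by
    have h1 := log_le_Hs (n-1)
    have hc : (((n-1:ℕ)):ℝ) + 1 = (n:ℝ) := by
      have h2 : 1 ≤ n := by omega
      push_cast [Nat.cast_sub h2]
      ring
    rw [hc] at h1
    exact h1
  have hkey : ((n:ℝ) - 1) ≤ ((b:ℝ) - 1) * Hs (n-1) := by
    have h1 : (1+ε) * n ≤ (b:ℝ) * Real.log n := (div_le_iff₀ hlogpos).mp hb
    have hbge1R : (1:ℝ) ≤ (b:ℝ) := by exact_mod_cast hb1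
    have h2 : ((b:ℝ)-1) * Real.log n ≤ ((b:ℝ)-1) * Hs (n-1) :=
      mul_le_mul_of_nonneg_left hH (by linarith)
    nlinarith [hlogeps, h1, h2, hlogpos]
  have hmain := main n b hb1 ((diboard n).card) ∅ ∅ Finset.univ ?_ ?_ ?_ ?_ ?_
  · exact hmain
  · simp
  · rw [Finset.card_univ, Fintype.card_fin]
    omega
  · intro v _ u
    exact Finset.notMem_empty _
  · intro v _ w _
    rw [rB_empty, rB_empty]
    omega
  · have hsum : ∑ v ∈ Finset.univ, rB n (∅ : Finset (E n)) v = n * (n-1) := by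
      rw [Finset.sum_congr rfl (fun v _ => rB_empty v), Finset.sum_const, Finset.card_univ,
        Fintype.card_fin, smul_eq_mul]
    rw [hsum, Finset.card_univ, Fintype.card_fin]
    have h2 : 1 ≤ n := by omega
    have hcast : ((n * (n-1) : ℕ) : ℝ) = (n:ℝ) * ((n:ℝ) - 1) := by
      push_cast [Nat.cast_sub h2]
      ring
    rw [hcast]
    have hnn : (0:ℝ) ≤ (n:ℝ) := by positivity
    calc (n:ℝ) * ((n:ℝ) - 1) ≤ (n:ℝ) * (((b:ℝ) - 1) * Hs (n-1)) :=
          mul_le_mul_of_nonneg_left hkey hnn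
    _ = (n:ℝ) * ((b:ℝ) - 1) * Hs (n-1) := by ring
end

section
/- Fix α ∈ (0,1). There exists K₀ = K₀(α) such that for every integer K ≥ K₀ (in particular any K ≥ (2 − 2·log(1−α))/α sufficiently large with respect to α) we have lim_{n→∞} Σ_{s=K}^{⌊(1−α)²·n⌋} ( (n·e/s) · ( s/((1−α)·n) )^K )^s = 0. -/
open Filter Real

/-- For fixed `α ∈ (0,1)` there is `K₀ = K₀(α)` such that for every integer `K ≥ K₀`,
`Σ_{s=K}^{⌊(1−α)²·n⌋} ((n·e/s) · (s/((1−α)·n))^K)^s → 0` as `n → ∞`. -/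
theorem sum_expander_failure_tendsto_zero (α : ℝ) (hα0 : 0 < α) (hα1 : α < 1) :
    ∃ K₀ : ℕ, ∀ K : ℕ, K₀ ≤ K →
      Tendsto (fun n : ℕ =>
          ∑ s ∈ Finset.Icc K ⌊(1 - α) ^ 2 * (n : ℝ)⌋₊,
            (((n : ℝ) * Real.exp 1 / s) * ((s : ℝ) / ((1 - α) * n)) ^ (K : ℝ)) ^ (s : ℝ))
        atTop (nhds 0) := by
  have hβ0 : (0:ℝ) < 1 - α := by linarith
  have hβ1 : 1 - α < 1 := by linarith
  obtain ⟨m, hm⟩ := exists_pow_lt_of_lt_one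
    (show (0:ℝ) < 1/(2 * Real.exp 1) by positivity) hβ1
  refine ⟨m + 2, fun K hK => ?_⟩
  obtain ⟨k, rfl⟩ : ∃ k, K = k + 2 := ⟨K - 2, by omega⟩
  have hb_half : Real.exp 1 * (1 - α) ^ k ≤ 1/2 := by
    have h1 : (1 - α) ^ k ≤ (1 - α) ^ m :=
      pow_le_pow_of_le_one hβ0.le hβ1.le (by omega)
    have h2 : Real.exp 1 * (1 - α) ^ m < Real.exp 1 * (1/(2 * Real.exp 1)) :=
      mul_lt_mul_of_pos_left hm (Real.exp_pos 1)
    have h3 : Real.exp 1 * (1/(2 * Real.exp 1)) = 1/2 := by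
      field_simp
    nlinarith [Real.exp_pos 1]
  have hTsum : Summable (fun s : ℕ => (s:ℝ)^(k+1) * (1/2:ℝ)^s) :=
    summable_pow_mul_geometric_of_norm_lt_one (k+1) (by norm_num : ‖(1/2:ℝ)‖ < 1)
  set T := ∑' s : ℕ, (s:ℝ)^(k+1) * (1/2:ℝ)^s with hT
  have hT0 : 0 ≤ T := tsum_nonneg fun s => by positivity
  set C := 2 * Real.exp 1 * T / (1 - α)^(k+2) with hC
  have hC0 : 0 ≤ C := div_nonneg (by positivity) (pow_nonneg hβ0.le _)
  have hg : Tendsto (fun n : ℕ => C / (n:ℝ)^(k+1)) atTop (nhds 0) := by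
    have h1 : Tendsto (fun n : ℕ => ((n:ℝ)^(k+1))⁻¹) atTop (nhds 0) := by
      apply Tendsto.inv_tendsto_atTop
      exact (tendsto_pow_atTop (by omega)).comp tendsto_natCast_atTop_atTop
    simpa [div_eq_mul_inv] using h1.const_mul C
  apply squeeze_zero (g := fun n : ℕ => C / (n:ℝ)^(k+1)) (fun n => ?_) (fun n => ?_) hg
  · -- nonnegativity of the sum
    apply Finset.sum_nonneg
    intro s hs
    apply Real.rpow_nonneg
    apply mul_nonneg (div_nonneg (by positivity) (Nat.cast_nonneg s))
    apply Real.rpow_nonneg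
    exact div_nonneg (Nat.cast_nonneg s) (mul_nonneg hβ0.le (Nat.cast_nonneg n))
  · -- main bound
    rcases Finset.eq_empty_or_nonempty (Finset.Icc (k+2) ⌊(1-α)^2*(n:ℝ)⌋₊) with he | hne
    · rw [he, Finset.sum_empty]
      exact div_nonneg hC0 (by positivity)
    · have hab : k + 2 ≤ ⌊(1-α)^2*(n:ℝ)⌋₊ := (Finset.nonempty_Icc).1 hne
      have hfl1 : (1:ℝ) ≤ (1-α)^2 * n := by
        have : 0 < ⌊(1-α)^2*(n:ℝ)⌋₊ := by omega
        exact (Nat.floor_pos).1 this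
      have hn0 : (0:ℝ) < n := by nlinarith [sq_nonneg (1-α), Nat.cast_nonneg (α := ℝ) n]
      set D := 2 * Real.exp 1 / ((1-α)^(k+2) * (n:ℝ)^(k+1)) with hD
      have hD0 : 0 ≤ D := div_nonneg (by positivity)
        (mul_nonneg (pow_nonneg hβ0.le _) (by positivity))
      calc ∑ s ∈ Finset.Icc (k+2) ⌊(1-α)^2*(n:ℝ)⌋₊,
            (((n : ℝ) * Real.exp 1 / s) * ((s : ℝ) / ((1 - α) * n)) ^ ((k+2 : ℕ) : ℝ)) ^ (s : ℝ)
          ≤ ∑ s ∈ Finset.Icc (k+2) ⌊(1-α)^2*(n:ℝ)⌋₊, D * ((s:ℝ)^(k+1) * (1/2:ℝ)^s) := by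
            apply Finset.sum_le_sum
            intro s hs
            obtain ⟨hsK, hsM⟩ := Finset.mem_Icc.1 hs
            have hs0 : (0:ℝ) < s := by exact_mod_cast (by omega : 0 < s)
            have hsn : (s:ℝ) ≤ (1-α)^2 * n := by
              calc (s:ℝ) ≤ (⌊(1-α)^2*(n:ℝ)⌋₊ : ℝ) := by exact_mod_cast hsM
                _ ≤ (1-α)^2 * n := Nat.floor_le (by positivity)
            rw [Real.rpow_natCast, Real.rpow_natCast]
            have hsne : (s:ℝ) ≠ 0 := hs0.ne'
            have hnne : (n:ℝ) ≠ 0 := hn0.ne'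
            have hβne : (1-α) ≠ 0 := hβ0.ne'
            have hβpne : ((1-α):ℝ)^(k+2) ≠ 0 := pow_ne_zero _ hβne
            set b := ((n : ℝ) * Real.exp 1 / s) * ((s : ℝ) / ((1 - α) * n)) ^ (k+2) with hb
            have hbeq : b = Real.exp 1 / (1-α)^(k+2) * ((s:ℝ)/n)^(k+1) := by
              rw [hb, div_pow, mul_pow]
              field_simp
              rw [div_pow, eq_comm, mul_div_assoc', div_eq_iff (pow_ne_zero _ hnne)]
              ring
            have hb0 : 0 ≤ b := by
              rw [hbeq]
              positivity
            have hble : b ≤ 1/2 := by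
              rw [hbeq]
              have h1 : ((s:ℝ)/n)^(k+1) ≤ ((1-α)^2)^(k+1) :=
                pow_le_pow_left₀ (by positivity) ((div_le_iff₀ hn0).2 (by linarith [hsn])) _
              calc Real.exp 1 / (1-α)^(k+2) * ((s:ℝ)/n)^(k+1)
                  ≤ Real.exp 1 / (1-α)^(k+2) * ((1-α)^2)^(k+1) :=
                    mul_le_mul_of_nonneg_left h1 (by positivity)
                _ = Real.exp 1 * (1-α)^k := by
                    rw [← pow_mul, show 2*(k+1) = (k+2) + k by ring, pow_add]
                    field_simp
                    ring
                _ ≤ 1/2 := hb_half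
            have hs1 : s - 1 + 1 = s := by omega
            calc b ^ s = b * b ^ (s-1) := by rw [← pow_succ', hs1]
              _ ≤ b * (1/2:ℝ) ^ (s-1) :=
                  mul_le_mul_of_nonneg_left (pow_le_pow_left₀ hb0 hble _) hb0
              _ = 2 * b * (1/2:ℝ) ^ s := by
                  have hh : (1/2:ℝ)^s = (1/2:ℝ)^(s-1) * (1/2) := by
                    rw [← pow_succ, hs1]
                  rw [hh]; ring
              _ = D * ((s:ℝ)^(k+1) * (1/2:ℝ)^s) := by
                  rw [hbeq, hD]
                  field_simp
                  rw [div_pow, div_mul_cancel₀ _ (pow_ne_zero _ hnne)]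
        _ = D * ∑ s ∈ Finset.Icc (k+2) ⌊(1-α)^2*(n:ℝ)⌋₊, ((s:ℝ)^(k+1) * (1/2:ℝ)^s) :=
            (Finset.mul_sum _ _ _).symm
        _ ≤ D * T :=
            mul_le_mul_of_nonneg_left (Summable.sum_le_tsum _ (fun s _ => by positivity) hTsum) hD0
        _ = C / (n:ℝ)^(k+1) := by
            have h1 : ((1-α):ℝ)^(k+2) ≠ 0 := pow_ne_zero _ hβ0.ne'
            have h2 : (n:ℝ)^(k+1) ≠ 0 := pow_ne_zero _ hn0.ne'
            rw [hC, hD]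
            field_simp
            try ring
end

section
/- Fix α ∈ (0,1). There exists K₀ = K₀(α) such that for every integer K ≥ K₀ the following holds with high probability (probability tending to 1 as n → ∞) in the random digraph D of the adversarial K-out/K-in model: for every nonempty S ⊆ [n] with |S| ≤ (1−α)²·n, the edge sets {(i,j) ∈ E(D) : i ∈ S, j ∉ S} and {(i,j) ∈ E(D) : i ∉ S, j ∈ S} are both nonempty. -/
open scoped Classical

/-- A configuration of the K-out/K-in model on `Fin n`: for each vertex `v`, a pair of
sets `(OUT v, IN v)`. -/
abbrev Config (n : ℕ) := (Fin n → Finset (Fin n)) × (Fin n → Finset (Fin n))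

/-- The configurations that are valid for the adversarial choices `A B` and parameter
`K`: for each vertex `v`, `OUT v` is a `K`-element subset of `A v` and `IN v` is a
`K`-element subset of `B v`.  The random digraph of the model is a uniformly random
element of this finite set (this is exactly choosing each `OUT v` uniformly among the
`K`-subsets of `A v` and each `IN v` uniformly among the `K`-subsets of `B v`, all `2n`
choices independently). -/
noncomputable def validConfigs (n K : ℕ) (A B : Fin n → Finset (Fin n)) :
    Finset (Config n) :=
  Finset.univ.filter (fun c =>
    ∀ v : Fin n, c.1 v ⊆ A v ∧ (c.1 v).card = K ∧ c.2 v ⊆ B v ∧ (c.2 v).card = K)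

/-- `(i, j)` is an edge of the digraph `D` associated with the configuration `c`:
`E(D) = {(v,u) : u ∈ OUT(v)} ∪ {(u,v) : u ∈ IN(v)}`. -/
def hasEdge {n : ℕ} (c : Config n) (i j : Fin n) : Prop :=
  j ∈ c.1 i ∨ i ∈ c.2 j

/-- The adversarial sets `A v`, `B v` are arbitrary subsets of `[n] ∖ {v}` of size
`⌈(1−α)·n⌉`. -/
def ValidAdversary {n : ℕ} (α : ℝ) (A B : Fin n → Finset (Fin n)) : Prop :=
  ∀ v : Fin n, A v ⊆ Finset.univ.erase v ∧ (A v).card = ⌈(1 - α) * (n : ℝ)⌉₊ ∧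
    B v ⊆ Finset.univ.erase v ∧ (B v).card = ⌈(1 - α) * (n : ℝ)⌉₊

/-- The probability, under the uniform distribution on the valid configurations for
`n, K, A, B`, of the event `E`. -/
noncomputable def probOf (n K : ℕ) (A B : Fin n → Finset (Fin n))
    (E : Config n → Prop) : ℝ :=
  ((validConfigs n K A B).filter E).card / (validConfigs n K A B).card

lemma dF_pow_le (K a m : ℕ) (h : a ≤ m) :
    a.descFactorial K * m ^ K ≤ m.descFactorial K * a ^ K := by
  induction K with
  | zero => simp
  | succ K ih =>
    rw [Nat.descFactorial_succ, Nat.descFactorial_succ, pow_succ, pow_succ]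
    have h1 : (a - K) * m ≤ (m - K) * a := by
      rw [Nat.sub_mul, Nat.sub_mul]
      have h2 : a * m - K * m ≤ a * m - K * a := Nat.sub_le_sub_left (Nat.mul_le_mul_left K h) _
      calc a * m - K * m ≤ a * m - K * a := h2
        _ = m * a - K * a := by rw [Nat.mul_comm]
    calc (a - K) * a.descFactorial K * (m ^ K * m)
        = ((a - K) * m) * (a.descFactorial K * m ^ K) := by ring
      _ ≤ ((m - K) * a) * (m.descFactorial K * a ^ K) := Nat.mul_le_mul h1 ih
      _ = (m - K) * m.descFactorial K * (a ^ K * a) := by ring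

lemma choose_pow_le (K a m : ℕ) (h : a ≤ m) :
    a.choose K * m ^ K ≤ m.choose K * a ^ K := by
  have hd := dF_pow_le K a m h
  rw [Nat.descFactorial_eq_factorial_mul_choose, Nat.descFactorial_eq_factorial_mul_choose] at hd
  have : K.factorial * (a.choose K * m ^ K) ≤ K.factorial * (m.choose K * a ^ K) := by
    calc K.factorial * (a.choose K * m ^ K) = K.factorial * a.choose K * m ^ K := by ring
      _ ≤ K.factorial * m.choose K * a ^ K := hd
      _ = K.factorial * (m.choose K * a ^ K) := by ring
  exact Nat.le_of_mul_le_mul_left this K.factorial_pos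

lemma choose_ratio_le (K a m : ℕ) (h : a ≤ m) (hm : 0 < m) :
    (a.choose K : ℝ) / m.choose K ≤ ((a : ℝ) / m) ^ K := by
  rcases Nat.lt_or_ge m K with hmK | hmK
  · have h0 : a.choose K = 0 := Nat.choose_eq_zero_of_lt (lt_of_le_of_lt h hmK)
    rw [h0]
    simp only [Nat.cast_zero, zero_div]
    positivity
  · have hc : 0 < m.choose K := Nat.choose_pos hmK
    rw [div_le_iff₀ (by exact_mod_cast hc), div_pow, div_mul_eq_mul_div,
      le_div_iff₀ (by positivity)]
    have := choose_pow_le K a m h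
    calc (a.choose K : ℝ) * (m : ℝ) ^ K = ((a.choose K * m ^ K : ℕ) : ℝ) := by push_cast; ring
      _ ≤ ((m.choose K * a ^ K : ℕ) : ℝ) := by exact_mod_cast this
      _ = (a : ℝ) ^ K * (m.choose K : ℝ) := by push_cast; ring

lemma factorial_ge_pow (s : ℕ) : ((s : ℝ) / 3) ^ s ≤ s.factorial := by
  induction s with
  | zero => simp
  | succ s ih =>
    have key : ((s : ℝ) + 1) ^ s ≤ 3 * (s : ℝ) ^ s := by
      rcases Nat.eq_zero_or_pos s with rfl | hs
      · norm_num
      · have hs' : (0 : ℝ) < s := by exact_mod_cast hs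
        have h1 : (s : ℝ) + 1 ≤ s * Real.exp (1 / s) := by
          have h2 := Real.add_one_le_exp (1 / (s : ℝ))
          calc (s : ℝ) + 1 = s * (1 / s + 1) := by field_simp; ring
            _ ≤ s * Real.exp (1 / s) := mul_le_mul_of_nonneg_left h2 (le_of_lt hs')
        calc ((s : ℝ) + 1) ^ s ≤ (s * Real.exp (1 / s)) ^ s :=
              pow_le_pow_left₀ (by positivity) h1 s
          _ = (s : ℝ) ^ s * Real.exp (1 / s) ^ s := mul_pow _ _ _
          _ = (s : ℝ) ^ s * Real.exp 1 := by
              rw [← Real.exp_nat_mul]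
              congr 1
              field_simp
          _ ≤ (s : ℝ) ^ s * 3 := by
              refine mul_le_mul_of_nonneg_left ?_ (by positivity)
              linarith [Real.exp_one_lt_d9]
          _ = 3 * (s : ℝ) ^ s := by ring
    have step : (((s : ℝ) + 1) / 3) ^ (s + 1) ≤ ((s : ℝ) + 1) * ((s : ℝ) / 3) ^ s := by
      have e1 : (((s : ℝ) + 1) / 3) ^ s ≤ 3 * ((s : ℝ) / 3) ^ s := by
        rw [div_pow, div_pow]
        rw [div_le_iff₀ (by positivity)]
        calc ((s : ℝ) + 1) ^ s ≤ 3 * (s : ℝ) ^ s := key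
          _ = 3 * ((s:ℝ) ^ s / 3 ^ s) * 3 ^ s := by field_simp
      calc (((s : ℝ) + 1) / 3) ^ (s + 1) = (((s : ℝ) + 1) / 3) ^ s * (((s : ℝ) + 1) / 3) := pow_succ _ _
        _ ≤ (3 * ((s : ℝ) / 3) ^ s) * (((s : ℝ) + 1) / 3) := by
            refine mul_le_mul_of_nonneg_right e1 (by positivity)
        _ = ((s : ℝ) + 1) * ((s : ℝ) / 3) ^ s := by ring
    calc (((s + 1 : ℕ) : ℝ) / 3) ^ (s + 1) = (((s : ℝ) + 1) / 3) ^ (s + 1) := by push_cast; ring_nf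
      _ ≤ ((s : ℝ) + 1) * ((s : ℝ) / 3) ^ s := step
      _ ≤ ((s : ℝ) + 1) * s.factorial := mul_le_mul_of_nonneg_left ih (by positivity)
      _ = ((s + 1).factorial : ℝ) := by rw [Nat.factorial_succ]; push_cast; ring

lemma choose_le_real (n s : ℕ) (hs : 0 < s) :
    (n.choose s : ℝ) ≤ (3 * n / s) ^ s := by
  have h1 : (n.choose s : ℝ) * s.factorial ≤ (n : ℝ) ^ s := by
    have := Nat.descFactorial_le_pow n s
    rw [Nat.descFactorial_eq_factorial_mul_choose] at this
    calc (n.choose s : ℝ) * s.factorial = ((s.factorial * n.choose s : ℕ) : ℝ) := by push_cast; ring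
      _ ≤ ((n ^ s : ℕ) : ℝ) := by exact_mod_cast this
      _ = (n : ℝ) ^ s := by push_cast; ring
  have hs' : (0 : ℝ) < s := by exact_mod_cast hs
  have hf : (0 : ℝ) < s.factorial := by exact_mod_cast s.factorial_pos
  have h2 : ((s : ℝ) / 3) ^ s ≤ s.factorial := factorial_ge_pow s
  have h3 : (n.choose s : ℝ) ≤ (n : ℝ) ^ s / s.factorial := by
    rw [le_div_iff₀ hf]; exact h1
  refine h3.trans ?_
  rw [div_le_iff₀ hf]
  calc (3 * (n : ℝ) / s) ^ s * s.factorial ≥ (3 * (n : ℝ) / s) ^ s * ((s : ℝ) / 3) ^ s := by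
        refine mul_le_mul_of_nonneg_left h2 (by positivity)
    _ = ((3 * (n : ℝ) / s) * ((s : ℝ) / 3)) ^ s := (mul_pow _ _ _).symm
    _ = (n : ℝ) ^ s := by
        congr 1
        field_simp

lemma card_config_filter {n : ℕ} (F G : Fin n → Finset (Finset (Fin n))) :
    (Finset.univ.filter (fun c : Config n => ∀ v, c.1 v ∈ F v ∧ c.2 v ∈ G v)).card
      = ∏ v, ((F v).card * (G v).card) := by
  rw [← Fintype.card_subtype]
  have e : {c : Config n // ∀ v, c.1 v ∈ F v ∧ c.2 v ∈ G v} ≃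
      ((v : Fin n) → {x // x ∈ F v}) × ((v : Fin n) → {x // x ∈ G v}) :=
    { toFun := fun c => (fun v => ⟨c.1.1 v, (c.2 v).1⟩, fun v => ⟨c.1.2 v, (c.2 v).2⟩)
      invFun := fun p => ⟨(fun v => (p.1 v : Finset (Fin n)), fun v => (p.2 v : Finset (Fin n))),
        fun v => ⟨(p.1 v).2, (p.2 v).2⟩⟩
      left_inv := fun c => rfl
      right_inv := fun p => rfl }
  rw [Fintype.card_congr e, Fintype.card_prod, Fintype.card_pi, Fintype.card_pi]
  simp only [Fintype.card_coe]
  rw [← Finset.prod_mul_distrib]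

lemma card_validConfigs {n K m : ℕ} {A B : Fin n → Finset (Fin n)}
    (hA : ∀ v, (A v).card = m) (hB : ∀ v, (B v).card = m) :
    (validConfigs n K A B).card = (m.choose K * m.choose K) ^ n := by
  have : validConfigs n K A B = Finset.univ.filter
      (fun c : Config n => ∀ v, c.1 v ∈ (A v).powersetCard K ∧ c.2 v ∈ (B v).powersetCard K) := by
    unfold validConfigs
    apply Finset.filter_congr
    intro c _
    simp only [Finset.mem_powersetCard]
    constructor
    · intro h v; obtain ⟨h1, h2, h3, h4⟩ := h v; exact ⟨⟨h1, h2⟩, h3, h4⟩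
    · intro h v; obtain ⟨⟨h1, h2⟩, h3, h4⟩ := h v; exact ⟨h1, h2, h3, h4⟩
  rw [this, card_config_filter]
  simp only [Finset.card_powersetCard, hA, hB]
  rw [Finset.prod_const, Finset.card_univ, Fintype.card_fin]

lemma card_Wout_le {n K m : ℕ} {A B : Fin n → Finset (Fin n)}
    (hA : ∀ v, (A v).card = m) (hB : ∀ v, (B v).card = m) (S : Finset (Fin n)) :
    ((validConfigs n K A B).filter (fun c => ∀ i ∈ S, c.1 i ⊆ S)).card
      ≤ (S.card.choose K * m.choose K) ^ S.card
        * (m.choose K * m.choose K) ^ (n - S.card) := by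
  set F : Fin n → Finset (Finset (Fin n)) :=
    fun v => (if v ∈ S then A v ∩ S else A v).powersetCard K with hF
  have heq : (validConfigs n K A B).filter (fun c => ∀ i ∈ S, c.1 i ⊆ S)
      = Finset.univ.filter
        (fun c : Config n => ∀ v, c.1 v ∈ F v ∧ c.2 v ∈ (B v).powersetCard K) := by
    unfold validConfigs
    rw [Finset.filter_filter]
    apply Finset.filter_congr
    intro c _
    simp only [hF, Finset.mem_powersetCard]
    constructor
    · rintro ⟨h, hS⟩ v
      obtain ⟨h1, h2, h3, h4⟩ := h v
      refine ⟨⟨?_, h2⟩, h3, h4⟩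
      by_cases hv : v ∈ S
      · simp only [hv, if_true]
        exact Finset.subset_inter h1 (hS v hv)
      · simp only [hv, if_false]; exact h1
    · intro h
      constructor
      · intro v
        obtain ⟨⟨h1, h2⟩, h3, h4⟩ := h v
        refine ⟨?_, h2, h3, h4⟩
        by_cases hv : v ∈ S
        · simp only [hv, if_true] at h1
          exact h1.trans Finset.inter_subset_left
        · simpa [hv] using h1
      · intro v hv
        obtain ⟨⟨h1, _⟩, _, _⟩ := h v
        simp only [hv, if_true] at h1
        exact h1.trans Finset.inter_subset_right
  rw [heq, card_config_filter]
  have hsplit : (∏ v, ((F v).card * ((B v).powersetCard K).card))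
      = (∏ v ∈ S, ((F v).card * ((B v).powersetCard K).card))
        * ∏ v ∈ Sᶜ, ((F v).card * ((B v).powersetCard K).card) :=
    (Finset.prod_mul_prod_compl S _).symm
  rw [hsplit]
  have h1 : (∏ v ∈ S, ((F v).card * ((B v).powersetCard K).card))
      ≤ (S.card.choose K * m.choose K) ^ S.card := by
    rw [← Finset.prod_const]
    apply Finset.prod_le_prod'
    intro v hv
    simp only [hF, hv, if_true, Finset.card_powersetCard, hB]
    apply Nat.mul_le_mul_right
    apply Nat.choose_le_choose
    exact Finset.card_le_card Finset.inter_subset_right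
  have h2 : (∏ v ∈ Sᶜ, ((F v).card * ((B v).powersetCard K).card))
      ≤ (m.choose K * m.choose K) ^ (n - S.card) := by
    have : ∀ v ∈ Sᶜ, (F v).card * ((B v).powersetCard K).card = m.choose K * m.choose K := by
      intro v hv
      rw [Finset.mem_compl] at hv
      simp only [hF, hv, if_false, Finset.card_powersetCard, hA, hB]
    rw [Finset.prod_congr rfl this, Finset.prod_const, Finset.card_compl, Fintype.card_fin]
  exact Nat.mul_le_mul h1 h2

lemma card_Win_le {n K m : ℕ} {A B : Fin n → Finset (Fin n)}
    (hA : ∀ v, (A v).card = m) (hB : ∀ v, (B v).card = m) (S : Finset (Fin n)) :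
    ((validConfigs n K A B).filter (fun c => ∀ i ∈ S, c.2 i ⊆ S)).card
      ≤ (S.card.choose K * m.choose K) ^ S.card
        * (m.choose K * m.choose K) ^ (n - S.card) := by
  set G : Fin n → Finset (Finset (Fin n)) :=
    fun v => (if v ∈ S then B v ∩ S else B v).powersetCard K with hG
  have heq : (validConfigs n K A B).filter (fun c => ∀ i ∈ S, c.2 i ⊆ S)
      = Finset.univ.filter
        (fun c : Config n => ∀ v, c.1 v ∈ (A v).powersetCard K ∧ c.2 v ∈ G v) := by
    unfold validConfigs
    rw [Finset.filter_filter]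
    apply Finset.filter_congr
    intro c _
    simp only [hG, Finset.mem_powersetCard]
    constructor
    · rintro ⟨h, hS⟩ v
      obtain ⟨h1, h2, h3, h4⟩ := h v
      refine ⟨⟨h1, h2⟩, ?_, h4⟩
      by_cases hv : v ∈ S
      · simp only [hv, if_true]
        exact Finset.subset_inter h3 (hS v hv)
      · simp only [hv, if_false]; exact h3
    · intro h
      constructor
      · intro v
        obtain ⟨⟨h1, h2⟩, h3, h4⟩ := h v
        refine ⟨h1, h2, ?_, h4⟩
        by_cases hv : v ∈ S
        · simp only [hv, if_true] at h3
          exact h3.trans Finset.inter_subset_left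
        · simpa [hv] using h3
      · intro v hv
        obtain ⟨_, h3, _⟩ := h v
        simp only [hv, if_true] at h3
        exact h3.trans Finset.inter_subset_right
  rw [heq, card_config_filter]
  have hsplit : (∏ v, (((A v).powersetCard K).card * (G v).card))
      = (∏ v ∈ S, (((A v).powersetCard K).card * (G v).card))
        * ∏ v ∈ Sᶜ, (((A v).powersetCard K).card * (G v).card) :=
    (Finset.prod_mul_prod_compl S _).symm
  rw [hsplit]
  have h1 : (∏ v ∈ S, (((A v).powersetCard K).card * (G v).card))
      ≤ (S.card.choose K * m.choose K) ^ S.card := by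
    rw [← Finset.prod_const]
    apply Finset.prod_le_prod'
    intro v hv
    simp only [hG, hv, if_true, Finset.card_powersetCard, hA]
    rw [Nat.mul_comm (S.card.choose K) (m.choose K)]
    apply Nat.mul_le_mul_left
    apply Nat.choose_le_choose
    exact Finset.card_le_card Finset.inter_subset_right
  have h2 : (∏ v ∈ Sᶜ, (((A v).powersetCard K).card * (G v).card))
      ≤ (m.choose K * m.choose K) ^ (n - S.card) := by
    have : ∀ v ∈ Sᶜ, ((A v).powersetCard K).card * (G v).card = m.choose K * m.choose K := by
      intro v hv
      rw [Finset.mem_compl] at hv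
      simp only [hG, hv, if_false, Finset.card_powersetCard, hA, hB]
    rw [Finset.prod_congr rfl this, Finset.prod_const, Finset.card_compl, Fintype.card_fin]
  exact Nat.mul_le_mul h1 h2

set_option maxHeartbeats 1000000 in
lemma sum_bound (β : ℝ) (hβ0 : 0 < β) (hβ1 : β < 1) (K n m smax : ℕ)
    (hK3 : 3 ≤ K) (hsmall : 3 * β ^ (K - 2) ≤ 1 / 2) (hn : 1 ≤ n)
    (hm : β * n ≤ m) (hsmax : (smax : ℝ) ≤ β ^ 2 * n) :
    ∑ s ∈ Finset.Icc 1 smax, (n.choose s : ℝ) * (((s : ℝ) / m) ^ K) ^ s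
      ≤ (3 / β ^ 3 + 1) / Nat.sqrt n := by
  set r := Nat.sqrt n with hr
  have hr1 : 1 ≤ r := Nat.sqrt_pos.mpr hn
  have hr1' : (1 : ℝ) ≤ r := by exact_mod_cast hr1
  have hr0' : (0 : ℝ) < r := by linarith
  have hn0 : (0 : ℝ) < n := by exact_mod_cast hn
  have hm0 : (0 : ℝ) < m := lt_of_lt_of_le (by positivity) hm
  set b : ℕ → ℝ := fun s => 3 * ((n : ℝ) / m) * ((s : ℝ) / m) ^ (K - 1) with hbdef
  have hb0 : ∀ s, 0 ≤ b s := by intro s; positivity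
  -- basic facts for s in range
  have hsm : ∀ s ∈ Finset.Icc 1 smax, (s : ℝ) / m ≤ β := by
    intro s hs
    rw [Finset.mem_Icc] at hs
    have h1 : (s : ℝ) ≤ β ^ 2 * n := le_trans (by exact_mod_cast hs.2) hsmax
    rw [div_le_iff₀ hm0]
    calc (s : ℝ) ≤ β ^ 2 * n := h1
      _ = β * (β * n) := by ring
      _ ≤ β * m := by nlinarith
  -- main term bound
  have hterm : ∀ s ∈ Finset.Icc 1 smax,
      (n.choose s : ℝ) * (((s : ℝ) / m) ^ K) ^ s ≤ b s ^ s := by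
    intro s hs
    rw [Finset.mem_Icc] at hs
    have hs0 : (0 : ℝ) < s := by exact_mod_cast hs.1
    have hb : (3 * (n : ℝ) / s) * ((s : ℝ) / m) ^ K = b s := by
      have hKe : K = (K - 1) + 1 := (Nat.succ_pred_eq_of_pos (by omega)).symm
      rw [hbdef]
      rw [hKe]
      simp only [Nat.add_sub_cancel, pow_succ]
      field_simp
    calc (n.choose s : ℝ) * (((s : ℝ) / m) ^ K) ^ s
        ≤ (3 * n / s) ^ s * (((s : ℝ) / m) ^ K) ^ s := by
          apply mul_le_mul_of_nonneg_right (choose_le_real n s hs.1) (by positivity)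
      _ = ((3 * (n : ℝ) / s) * ((s : ℝ) / m) ^ K) ^ s := (mul_pow _ _ _).symm
      _ = b s ^ s := by rw [hb]
  have hnm : (n : ℝ) / m ≤ 1 / β := by
    rw [div_le_div_iff₀ hm0 hβ0]
    linarith [hm]
  -- b ≤ 1/2
  have hhalf : ∀ s ∈ Finset.Icc 1 smax, b s ≤ 1 / 2 := by
    intro s hs
    have h1 := hsm s hs
    have h2 : ((s : ℝ) / m) ^ (K - 1) ≤ β ^ (K - 1) := by
      apply pow_le_pow_left₀ (by positivity) h1
    have h3 : β ^ (K - 1) = β ^ (K - 2) * β := by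
      rw [← pow_succ]
      congr 1
      omega
    calc b s ≤ 3 * (1 / β) * β ^ (K - 1) := by
          apply mul_le_mul (by nlinarith) h2 (by positivity) (by positivity)
      _ = 3 * β ^ (K - 2) := by rw [h3]; field_simp
      _ ≤ 1 / 2 := hsmall
  -- small s bound
  have hsmall_s : ∀ s ∈ Finset.Icc 1 smax, s ≤ r → b s ≤ 3 / (β ^ 3 * n) := by
    intro s hs hsr
    have h1 := hsm s hs
    have hsm1 : (s : ℝ) / m ≤ 1 := le_trans h1 (le_of_lt hβ1)
    have h2 : ((s : ℝ) / m) ^ (K - 1) ≤ ((s : ℝ) / m) ^ 2 :=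
      pow_le_pow_of_le_one (by positivity) hsm1 (by omega)
    have hs2 : (s : ℝ) * s ≤ n := by
      have h4 : s * s ≤ r * r := Nat.mul_le_mul hsr hsr
      have h5 := le_trans h4 (Nat.sqrt_le n)
      exact_mod_cast h5
    have hmsq : (β * n) ^ 2 ≤ (m : ℝ) ^ 2 := pow_le_pow_left₀ (by positivity) hm 2
    have h3 : ((s : ℝ) / m) ^ 2 ≤ 1 / (β ^ 2 * n) := by
      rw [div_pow, div_le_div_iff₀ (by positivity) (by positivity)]
      calc (s : ℝ) ^ 2 * (β ^ 2 * n) = ((s : ℝ) * s) * (β ^ 2 * n) := by ring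
        _ ≤ (n : ℝ) * (β ^ 2 * n) := mul_le_mul_of_nonneg_right hs2 (by positivity)
        _ = (β * n) ^ 2 := by ring
        _ ≤ (m : ℝ) ^ 2 := hmsq
        _ = 1 * (m : ℝ) ^ 2 := by ring
    calc b s ≤ 3 * (1 / β) * (1 / (β ^ 2 * n)) := by
          apply mul_le_mul (by nlinarith) (le_trans h2 h3) (by positivity) (by positivity)
      _ = 3 / (β ^ 3 * n) := by field_simp
  -- split the sum
  rw [← Finset.sum_filter_add_sum_filter_not (Finset.Icc 1 smax) (fun s => s ≤ r)]
  have hpart1 : ∑ s ∈ (Finset.Icc 1 smax).filter (fun s => s ≤ r),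
      (n.choose s : ℝ) * (((s : ℝ) / m) ^ K) ^ s ≤ 3 / (β ^ 3 * r) := by
    have hcard : ((Finset.Icc 1 smax).filter (fun s => s ≤ r)).card ≤ r := by
      have hsub : (Finset.Icc 1 smax).filter (fun s => s ≤ r) ⊆ Finset.Icc 1 r := by
        intro s hs
        simp only [Finset.mem_filter, Finset.mem_Icc] at hs ⊢
        exact ⟨hs.1.1, hs.2⟩
      calc ((Finset.Icc 1 smax).filter (fun s => s ≤ r)).card
          ≤ (Finset.Icc 1 r).card := Finset.card_le_card hsub
        _ = r := by rw [Nat.card_Icc]; omega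
    calc ∑ s ∈ (Finset.Icc 1 smax).filter (fun s => s ≤ r),
          (n.choose s : ℝ) * (((s : ℝ) / m) ^ K) ^ s
        ≤ ∑ s ∈ (Finset.Icc 1 smax).filter (fun s => s ≤ r), 3 / (β ^ 3 * n) := by
          apply Finset.sum_le_sum
          intro s hs
          rw [Finset.mem_filter] at hs
          have hmem := hs.1
          have h1 : 1 ≤ s := (Finset.mem_Icc.mp hmem).1
          refine le_trans (hterm s hmem) ?_
          calc b s ^ s ≤ b s := by
                apply pow_le_of_le_one (hb0 s) (le_trans (hhalf s hmem) (by norm_num)) (by omega)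
            _ ≤ 3 / (β ^ 3 * n) := hsmall_s s hmem hs.2
      _ = ((Finset.Icc 1 smax).filter (fun s => s ≤ r)).card * (3 / (β ^ 3 * n)) := by
          rw [Finset.sum_const, nsmul_eq_mul]
      _ ≤ r * (3 / (β ^ 3 * n)) := by
          apply mul_le_mul_of_nonneg_right _ (by positivity)
          exact_mod_cast hcard
      _ ≤ 3 / (β ^ 3 * r) := by
          have hrn : (r : ℝ) * r ≤ n := by exact_mod_cast Nat.sqrt_le n
          have he : (r : ℝ) * (3 / (β ^ 3 * n)) = 3 * r / (β ^ 3 * n) := by ring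
          rw [he, div_le_div_iff₀ (by positivity) (by positivity)]
          have hβ3 : (0:ℝ) < β ^ 3 := by positivity
          nlinarith [hrn, hβ3]
  have hpart2 : ∑ s ∈ (Finset.Icc 1 smax).filter (fun s => ¬ s ≤ r),
      (n.choose s : ℝ) * (((s : ℝ) / m) ^ K) ^ s ≤ 1 / r := by
    have hsub : (Finset.Icc 1 smax).filter (fun s => ¬ s ≤ r) ⊆ Finset.Ico (r + 1) (smax + 1) := by
      intro s hs
      simp only [Finset.mem_filter, Finset.mem_Icc, not_le] at hs
      rw [Finset.mem_Ico]
      omega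
    calc ∑ s ∈ (Finset.Icc 1 smax).filter (fun s => ¬ s ≤ r),
          (n.choose s : ℝ) * (((s : ℝ) / m) ^ K) ^ s
        ≤ ∑ s ∈ (Finset.Icc 1 smax).filter (fun s => ¬ s ≤ r), (1 / 2 : ℝ) ^ s := by
          apply Finset.sum_le_sum
          intro s hs
          rw [Finset.mem_filter] at hs
          refine le_trans (hterm s hs.1) ?_
          exact pow_le_pow_left₀ (hb0 s) (hhalf s hs.1) s
      _ ≤ ∑ s ∈ Finset.Ico (r + 1) (smax + 1), (1 / 2 : ℝ) ^ s := by
          apply Finset.sum_le_sum_of_subset_of_nonneg hsub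
          intro s _ _
          positivity
      _ ≤ (1 / 2 : ℝ) ^ r := by
          rcases le_or_gt (r + 1) (smax + 1) with hle | hlt
          · rw [geom_sum_Ico (by norm_num) hle]
            have h1 : (0:ℝ) ≤ (1/2:ℝ) ^ (smax + 1) := by positivity
            have h2 : ((1/2:ℝ) ^ (smax + 1) - (1/2) ^ (r + 1)) / (1/2 - 1)
                = 2 * ((1/2:ℝ) ^ (r+1) - (1/2) ^ (smax + 1)) := by ring
            rw [h2, pow_succ]
            nlinarith [h1]
          · rw [Finset.Ico_eq_empty (by omega), Finset.sum_empty]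
            positivity
      _ ≤ 1 / r := by
          have h1 : (r : ℝ) + 1 ≤ 2 ^ r := by
            have := Nat.lt_two_pow_self (n := r)
            have h2 : r + 1 ≤ 2 ^ r := this
            exact_mod_cast h2
          rw [div_pow, one_pow, div_le_div_iff₀ (by positivity) hr0']
          nlinarith
  calc _ ≤ 3 / (β ^ 3 * r) + 1 / r := add_le_add hpart1 hpart2
    _ = (3 / β ^ 3 + 1) / r := by rw [add_div, div_div]

lemma W_real_bound {n K m : ℕ} {A B : Fin n → Finset (Fin n)}
    (hA : ∀ v, (A v).card = m) (hB : ∀ v, (B v).card = m)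
    (hC : 0 < m.choose K) (hm0 : 0 < m) (S : Finset (Fin n)) (hsm : S.card ≤ m)
    (W : Finset (Config n))
    (hW : W.card ≤ (S.card.choose K * m.choose K) ^ S.card
        * (m.choose K * m.choose K) ^ (n - S.card)) :
    (W.card : ℝ) ≤ (((S.card : ℝ) / m) ^ K) ^ S.card * (validConfigs n K A B).card := by
  have hsn : S.card ≤ n := by
    have := Finset.card_le_univ S
    simpa using this
  set s := S.card with hs
  set C := m.choose K with hCdef
  set x : ℝ := ((s : ℝ) / m) ^ K with hx
  have hx0 : 0 ≤ x := by positivity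
  have hC0 : (0 : ℝ) < C := by exact_mod_cast hC
  have hbase : (s.choose K : ℝ) ≤ x * C := by
    have h1 := choose_ratio_le K s m hsm hm0
    rw [div_le_iff₀ hC0] at h1
    exact h1
  have hcast : (W.card : ℝ) ≤ ((s.choose K : ℝ) * C) ^ s * ((C : ℝ) * C) ^ (n - s) := by
    calc (W.card : ℝ) ≤ (((s.choose K * C) ^ s * (C * C) ^ (n - s) : ℕ) : ℝ) := by
          exact_mod_cast hW
      _ = ((s.choose K : ℝ) * C) ^ s * ((C : ℝ) * C) ^ (n - s) := by push_cast; ring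
  refine hcast.trans ?_
  rw [card_validConfigs hA hB]
  have h2 : ((s.choose K : ℝ) * C) ^ s ≤ (x * ((C : ℝ) * C)) ^ s := by
    apply pow_le_pow_left₀ (by positivity)
    calc (s.choose K : ℝ) * C ≤ (x * C) * C := by
          apply mul_le_mul_of_nonneg_right hbase (by positivity)
      _ = x * ((C : ℝ) * C) := by ring
  calc ((s.choose K : ℝ) * C) ^ s * ((C : ℝ) * C) ^ (n - s)
      ≤ (x * ((C : ℝ) * C)) ^ s * ((C : ℝ) * C) ^ (n - s) := by
        apply mul_le_mul_of_nonneg_right h2 (by positivity)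
    _ = x ^ s * (((C : ℝ) * C) ^ s * ((C : ℝ) * C) ^ (n - s)) := by rw [mul_pow]; ring
    _ = x ^ s * ((C : ℝ) * C) ^ n := by rw [← pow_add, Nat.add_sub_cancel' hsn]
    _ = x ^ s * (((C * C) ^ n : ℕ) : ℝ) := by push_cast; ring


set_option maxHeartbeats 2000000 in
/-- Fix `α ∈ (0,1)`.  There is `K₀ = K₀(α)` such that for every integer `K ≥ K₀`, with
high probability (probability at least `1 − δ` for any `δ > 0` once `n` is large, for
every adversarial choice of the sets `A, B`) the random digraph `D` of the adversarial
K-out/K-in model satisfies: every nonempty `S ⊆ [n]` with `|S| ≤ (1−α)²·n` has both an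
edge of `D` leaving `S` and an edge of `D` entering `S`. -/
theorem whp_small_sets_have_in_and_out_edges (α : ℝ) (hα0 : 0 < α) (hα1 : α < 1) :
    ∃ K₀ : ℕ, ∀ K : ℕ, K₀ ≤ K → ∀ δ : ℝ, 0 < δ →
      ∃ N : ℕ, ∀ n : ℕ, N ≤ n →
        ∀ A B : Fin n → Finset (Fin n), ValidAdversary α A B →
          1 - δ ≤ probOf n K A B (fun c =>
            ∀ S : Finset (Fin n), S.Nonempty → (S.card : ℝ) ≤ (1 - α) ^ 2 * n →
              (∃ i ∈ S, ∃ j ∉ S, hasEdge c i j) ∧ (∃ i ∉ S, ∃ j ∈ S, hasEdge c i j)) := by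
  have hβ0 : (0 : ℝ) < 1 - α := by linarith
  have hβ1 : (1 : ℝ) - α < 1 := by linarith
  obtain ⟨c, hc⟩ : ∃ c : ℕ, (1 - α) ^ c < 1 / 6 :=
    exists_pow_lt_of_lt_one (by norm_num) hβ1
  refine ⟨c + 3, ?_⟩
  intro K hK δ hδ
  have hK3 : 3 ≤ K := by omega
  have hsmall : 3 * (1 - α) ^ (K - 2) ≤ 1 / 2 := by
    have h1 : (1 - α) ^ (K - 2) ≤ (1 - α) ^ c :=
      pow_le_pow_of_le_one hβ0.le hβ1.le (by omega)
    nlinarith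
  set Cα : ℝ := 2 * (3 / (1 - α) ^ 3 + 1) with hCαdef
  have hCα0 : 0 < Cα := by positivity
  refine ⟨max ((⌈Cα / δ⌉₊ + 1) ^ 2) (⌈(K : ℝ) / (1 - α)⌉₊ + 1), ?_⟩
  intro n hn A B hAB
  have hn1 : 1 ≤ n := by
    have := le_trans (le_max_left _ _) hn
    calc 1 ≤ (⌈Cα / δ⌉₊ + 1) ^ 2 := Nat.one_le_iff_ne_zero.mpr (by positivity)
      _ ≤ n := this
  have hn0 : (0 : ℝ) < n := by exact_mod_cast hn1
  set m := ⌈(1 - α) * (n : ℝ)⌉₊ with hmdef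
  have hmlb : (1 - α) * n ≤ m := Nat.le_ceil _
  have hm0' : (0 : ℝ) < m := lt_of_lt_of_le (by positivity) hmlb
  have hm0 : 0 < m := by exact_mod_cast hm0'
  have hKm : K ≤ m := by
    have h1 : (⌈(K : ℝ) / (1 - α)⌉₊ + 1 : ℕ) ≤ n := le_trans (le_max_right _ _) hn
    have h2 : ((K : ℝ) / (1 - α)) ≤ n := by
      calc ((K : ℝ) / (1 - α)) ≤ ⌈(K : ℝ) / (1 - α)⌉₊ := Nat.le_ceil _
        _ ≤ n := by exact_mod_cast Nat.le_of_succ_le h1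
    have h3 : (K : ℝ) ≤ (1 - α) * n := by
      rw [div_le_iff₀ hβ0] at h2
      linarith
    have h4 : (K : ℝ) ≤ m := le_trans h3 hmlb
    exact_mod_cast h4
  have hA : ∀ v, (A v).card = m := fun v => (hAB v).2.1
  have hB : ∀ v, (B v).card = m := fun v => (hAB v).2.2.2
  have hC : 0 < m.choose K := Nat.choose_pos hKm
  set V := validConfigs n K A B with hVdef
  have hVcard : V.card = (m.choose K * m.choose K) ^ n := card_validConfigs hA hB
  have hVpos : 0 < V.card := by
    rw [hVcard]
    positivity
  have hVpos' : (0 : ℝ) < V.card := by exact_mod_cast hVpos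
  set P : Config n → Prop := fun c =>
    ∀ S : Finset (Fin n), S.Nonempty → (S.card : ℝ) ≤ (1 - α) ^ 2 * n →
      (∃ i ∈ S, ∃ j ∉ S, hasEdge c i j) ∧ (∃ i ∉ S, ∃ j ∈ S, hasEdge c i j) with hPdef
  set q : ℕ → ℝ := fun s => (((s : ℝ) / m) ^ K) ^ s with hqdef
  have hq0 : ∀ s, 0 ≤ q s := fun s => by positivity
  set badS : Finset (Finset (Fin n)) := Finset.univ.filter
    (fun S : Finset (Fin n) => S.Nonempty ∧ (S.card : ℝ) ≤ (1 - α) ^ 2 * n) with hbadSdef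
  set Wout : Finset (Fin n) → Finset (Config n) :=
    fun S => V.filter (fun c => ∀ i ∈ S, c.1 i ⊆ S) with hWoutdef
  set Win : Finset (Fin n) → Finset (Config n) :=
    fun S => V.filter (fun c => ∀ i ∈ S, c.2 i ⊆ S) with hWindef
  -- union bound subset
  have hsub : V.filter (fun c => ¬ P c) ⊆ badS.biUnion (fun S => Wout S ∪ Win S) := by
    intro cc hcc
    rw [Finset.mem_filter] at hcc
    obtain ⟨hccV, hnP⟩ := hcc
    have hnP' : ¬ (∀ S : Finset (Fin n), S.Nonempty → (S.card : ℝ) ≤ (1 - α) ^ 2 * n →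
        (∃ i ∈ S, ∃ j ∉ S, hasEdge cc i j) ∧ (∃ i ∉ S, ∃ j ∈ S, hasEdge cc i j)) := hnP
    push_neg at hnP'
    obtain ⟨S, hne, hcard, hfail⟩ := hnP'
    have hSmem : S ∈ badS := by
      rw [hbadSdef, Finset.mem_filter]
      exact ⟨Finset.mem_univ _, hne, hcard⟩
    rw [Finset.mem_biUnion]
    refine ⟨S, hSmem, ?_⟩
    rw [Finset.mem_union]
    by_cases hout : ∃ i ∈ S, ∃ j ∉ S, hasEdge cc i j
    · right
      rw [hWindef, Finset.mem_filter]
      refine ⟨hccV, ?_⟩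
      have hnin := hfail hout
      intro j hj x hx
      by_contra hxS
      exact hnin x hxS j hj (Or.inr hx)
    · left
      rw [hWoutdef, Finset.mem_filter]
      refine ⟨hccV, ?_⟩
      intro i hi x hx
      by_contra hxS
      exact hout ⟨i, hi, x, hxS, Or.inl hx⟩
  -- per-S real bounds
  have hperS : ∀ S ∈ badS,
      ((Wout S).card : ℝ) + ((Win S).card : ℝ) ≤ 2 * q S.card * V.card := by
    intro S hS
    rw [hbadSdef, Finset.mem_filter] at hS
    have hcard := hS.2.2
    have hsm : S.card ≤ m := by
      have h1 : (S.card : ℝ) ≤ m := by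
        calc (S.card : ℝ) ≤ (1 - α) ^ 2 * n := hcard
          _ ≤ (1 - α) * n := by nlinarith
          _ ≤ m := hmlb
      exact_mod_cast h1
    have h1 := W_real_bound hA hB hC hm0 S hsm (Wout S) (card_Wout_le hA hB S)
    have h2 := W_real_bound hA hB hC hm0 S hsm (Win S) (card_Win_le hA hB S)
    rw [hqdef]
    calc ((Wout S).card : ℝ) + ((Win S).card : ℝ)
        ≤ (((S.card : ℝ) / m) ^ K) ^ S.card * V.card
          + (((S.card : ℝ) / m) ^ K) ^ S.card * V.card := add_le_add h1 h2
      _ = 2 * (((S.card : ℝ) / m) ^ K) ^ S.card * V.card := by ring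
  -- group by size
  set smax := ⌊(1 - α) ^ 2 * (n : ℝ)⌋₊ with hsmaxdef
  have hgroup : ∑ S ∈ badS, q S.card
      ≤ ∑ s ∈ Finset.Icc 1 smax, (n.choose s : ℝ) * q s := by
    have hsub2 : badS ⊆ (Finset.Icc 1 smax).biUnion
        (fun s => Finset.univ.powersetCard s) := by
      intro S hS
      rw [hbadSdef, Finset.mem_filter] at hS
      rw [Finset.mem_biUnion]
      refine ⟨S.card, ?_, Finset.mem_powersetCard_univ.mpr rfl⟩
      rw [Finset.mem_Icc]
      constructor
      · exact Finset.card_pos.mpr hS.2.1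
      · exact Nat.le_floor hS.2.2
    have hdisj : (↑(Finset.Icc 1 smax) : Set ℕ).PairwiseDisjoint
        (fun s => (Finset.univ : Finset (Fin n)).powersetCard s) := by
      intro a _ b _ hab
      dsimp [Function.onFun]
      rw [Finset.disjoint_left]
      intro S hSa hSb
      rw [Finset.mem_powersetCard_univ] at hSa hSb
      exact hab (hSa ▸ hSb ▸ rfl)
    calc ∑ S ∈ badS, q S.card
        ≤ ∑ S ∈ (Finset.Icc 1 smax).biUnion (fun s => Finset.univ.powersetCard s),
            q S.card := by
          apply Finset.sum_le_sum_of_subset_of_nonneg hsub2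
          intro S _ _
          exact hq0 _
      _ = ∑ s ∈ Finset.Icc 1 smax, ∑ S ∈ Finset.univ.powersetCard s, q S.card :=
          Finset.sum_biUnion hdisj
      _ = ∑ s ∈ Finset.Icc 1 smax, (n.choose s : ℝ) * q s := by
          apply Finset.sum_congr rfl
          intro s _
          have : ∀ S ∈ (Finset.univ : Finset (Fin n)).powersetCard s, q S.card = q s := by
            intro S hS
            rw [Finset.mem_powersetCard_univ] at hS
            rw [hS]
          rw [Finset.sum_congr rfl this, Finset.sum_const, nsmul_eq_mul,
            Finset.card_powersetCard, Finset.card_univ, Fintype.card_fin]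
  -- numeric bound
  have hsum := sum_bound (1 - α) hβ0 hβ1 K n m smax hK3 hsmall hn1 hmlb
    (Nat.floor_le (by positivity))
  -- r large
  have hrbig : Cα / (Nat.sqrt n : ℝ) ≤ δ := by
    have h1 : (⌈Cα / δ⌉₊ + 1 : ℕ) ≤ Nat.sqrt n := by
      calc (⌈Cα / δ⌉₊ + 1 : ℕ) = Nat.sqrt ((⌈Cα / δ⌉₊ + 1) ^ 2) := (Nat.sqrt_eq' _).symm
        _ ≤ Nat.sqrt n := Nat.sqrt_le_sqrt (le_trans (le_max_left _ _) hn)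
    have h2 : Cα / δ ≤ (Nat.sqrt n : ℝ) := by
      calc Cα / δ ≤ ⌈Cα / δ⌉₊ := Nat.le_ceil _
        _ ≤ (Nat.sqrt n : ℝ) := by exact_mod_cast Nat.le_of_succ_le h1
    have hr0 : (0 : ℝ) < Nat.sqrt n := by
      have : (0 : ℝ) < Cα / δ + 1 := by positivity
      have h3 : (1 : ℕ) ≤ Nat.sqrt n := le_trans (by omega) h1
      exact_mod_cast h3
    rw [div_le_iff₀ hr0]
    rw [div_le_iff₀ hδ] at h2
    linarith
  -- total bad bound
  have hbad : ((V.filter (fun cc => ¬ P cc)).card : ℝ) ≤ δ * V.card := by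
    have hnatbound : (V.filter (fun cc => ¬ P cc)).card
        ≤ ∑ S ∈ badS, ((Wout S).card + (Win S).card) := by
      calc (V.filter (fun cc => ¬ P cc)).card
          ≤ (badS.biUnion (fun S => Wout S ∪ Win S)).card := Finset.card_le_card hsub
        _ ≤ ∑ S ∈ badS, (Wout S ∪ Win S).card := Finset.card_biUnion_le
        _ ≤ ∑ S ∈ badS, ((Wout S).card + (Win S).card) :=
            Finset.sum_le_sum (fun S _ => Finset.card_union_le _ _)
    calc ((V.filter (fun cc => ¬ P cc)).card : ℝ)
        ≤ ∑ S ∈ badS, (((Wout S).card : ℝ) + ((Win S).card : ℝ)) := by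
          exact_mod_cast hnatbound
      _ ≤ ∑ S ∈ badS, 2 * q S.card * V.card := Finset.sum_le_sum hperS
      _ = (∑ S ∈ badS, q S.card) * (2 * V.card) := by
          rw [Finset.sum_mul]
          exact Finset.sum_congr rfl fun S _ => by ring
      _ ≤ (∑ s ∈ Finset.Icc 1 smax, (n.choose s : ℝ) * q s) * (2 * V.card) := by
          apply mul_le_mul_of_nonneg_right hgroup (by positivity)
      _ ≤ ((3 / (1 - α) ^ 3 + 1) / Nat.sqrt n) * (2 * V.card) := by
          apply mul_le_mul_of_nonneg_right _ (by positivity)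
          exact hsum
      _ = (Cα / Nat.sqrt n) * V.card := by rw [hCαdef]; ring
      _ ≤ δ * V.card := mul_le_mul_of_nonneg_right hrbig hVpos'.le
  -- conclude
  have hsplit : (V.filter P).card + (V.filter (fun cc => ¬ P cc)).card = V.card :=
    Finset.card_filter_add_card_filter_not P
  have final : (1 - δ) * (V.card : ℝ) ≤ ((V.filter P).card : ℝ) := by
    have h2 : ((V.filter P).card : ℝ) + ((V.filter (fun cc => ¬ P cc)).card : ℝ)
        = V.card := by exact_mod_cast hsplit
    nlinarith [hbad, hVpos']
  show 1 - δ ≤ probOf n K A B P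
  unfold probOf
  refine (le_div_iff₀ hVpos').mpr ?_
  convert final using 3
  exact rfl
  exact Finset.filter_congr_decidable V P _
end

section
/- Let D be a digraph on a finite nonempty vertex set V, and let D′ be a digraph on V whose edge set contains all edges of D and which, for every pair (S,T) where S is a sink strong component of D and T is a source strong component of D, contains at least one edge from some vertex of S to some vertex of T. Then D′ is strongly connected. -/
open scoped Classical

/-- The strong component of a vertex `v` in the digraph `D`: all vertices `u` that are
mutually reachable with `v` by directed paths. -/
noncomputable def strongComp {V : Type*} [Fintype V] (D : V → V → Prop) (v : V) :
    Finset V :=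
  Finset.univ.filter (fun u =>
    Relation.ReflTransGen D v u ∧ Relation.ReflTransGen D u v)

/-- `C` is a sink strong component of `D`: it is a strong component and no edge of `D`
leaves it. -/
def IsSinkComp {V : Type*} [Fintype V] (D : V → V → Prop) (C : Finset V) : Prop :=
  (∃ v : V, C = strongComp D v) ∧ ∀ i ∈ C, ∀ j : V, D i j → j ∈ C

/-- `C` is a source strong component of `D`: it is a strong component and no edge of `D`
enters it. -/
def IsSourceComp {V : Type*} [Fintype V] (D : V → V → Prop) (C : Finset V) : Prop :=
  (∃ v : V, C = strongComp D v) ∧ ∀ j ∈ C, ∀ i : V, D i j → i ∈ C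

lemma exists_sink_aux {V : Type*} [Fintype V] (D : V → V → Prop) :
    ∀ n (v : V), (Finset.univ.filter (fun u => Relation.ReflTransGen D v u)).card ≤ n →
      ∃ C : Finset V,
        ((∃ x : V, C = Finset.univ.filter (fun u =>
            Relation.ReflTransGen D x u ∧ Relation.ReflTransGen D u x)) ∧
          ∀ i ∈ C, ∀ j : V, D i j → j ∈ C) ∧
        ∃ w ∈ C, Relation.ReflTransGen D v w := by
  classical
  intro n
  induction n with
  | zero =>
    intro v h
    exfalso
    have : v ∈ Finset.univ.filter (fun u => Relation.ReflTransGen D v u) :=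
      Finset.mem_filter.mpr ⟨Finset.mem_univ v, Relation.ReflTransGen.refl⟩
    have := Finset.card_pos.mpr ⟨v, this⟩
    omega
  | succ n ih =>
    intro v h
    by_cases hs : ∀ i ∈ (Finset.univ.filter (fun u =>
        Relation.ReflTransGen D v u ∧ Relation.ReflTransGen D u v)),
        ∀ j : V, D i j → j ∈ (Finset.univ.filter (fun u =>
        Relation.ReflTransGen D v u ∧ Relation.ReflTransGen D u v))
    · exact ⟨_, ⟨⟨v, rfl⟩, hs⟩, v,
        Finset.mem_filter.mpr ⟨Finset.mem_univ v, Relation.ReflTransGen.refl, Relation.ReflTransGen.refl⟩,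
        Relation.ReflTransGen.refl⟩
    · push_neg at hs
      obtain ⟨i, hi, j, hij, hj⟩ := hs
      simp only [Finset.mem_filter, Finset.mem_univ, true_and] at hi hj
      have hvj : Relation.ReflTransGen D v j :=
        hi.1.trans (Relation.ReflTransGen.single hij)
      have hjv : ¬ Relation.ReflTransGen D j v := by
        intro hjv; exact hj ⟨hvj, hjv⟩
      have hss : (Finset.univ.filter (fun u => Relation.ReflTransGen D j u)) ⊂
          (Finset.univ.filter (fun u => Relation.ReflTransGen D v u)) := by
        constructor
        · intro x hx
          simp only [Finset.mem_filter, Finset.mem_univ, true_and] at hx ⊢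
          exact hvj.trans hx
        · intro hsub
          have : v ∈ Finset.univ.filter (fun u => Relation.ReflTransGen D j u) := by
            apply hsub
            exact Finset.mem_filter.mpr ⟨Finset.mem_univ v, Relation.ReflTransGen.refl⟩
          simp only [Finset.mem_filter, Finset.mem_univ, true_and] at this
          exact hjv this
      have hcard := Finset.card_lt_card hss
      obtain ⟨C, hC, w, hw, hjw⟩ := ih j (by omega)
      exact ⟨C, hC, w, hw, hvj.trans hjw⟩

lemma exists_sink {V : Type*} [Fintype V] (D : V → V → Prop) (v : V) :
    ∃ C : Finset V, IsSinkComp D C ∧ ∃ w ∈ C, Relation.ReflTransGen D v w := by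
  obtain ⟨C, hC, hw⟩ := exists_sink_aux D _ v le_rfl
  exact ⟨C, ⟨by obtain ⟨x, hx⟩ := hC.1; exact ⟨x, by rw [hx]; rfl⟩, hC.2⟩, hw⟩

lemma exists_source {V : Type*} [Fintype V] (D : V → V → Prop) (v : V) :
    ∃ C : Finset V, IsSourceComp D C ∧ ∃ w ∈ C, Relation.ReflTransGen D w v := by
  obtain ⟨C, hC, w, hw, hvw⟩ := exists_sink (Function.swap D) v
  refine ⟨C, ⟨?_, ?_⟩, w, hw, Relation.reflTransGen_swap.mp hvw⟩
  · obtain ⟨x, hx⟩ := hC.1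
    refine ⟨x, ?_⟩
    rw [hx]
    unfold strongComp
    ext u
    simp only [Finset.mem_filter, Finset.mem_univ, true_and]
    exact ⟨fun ⟨h1, h2⟩ => ⟨Relation.reflTransGen_swap.mp h2, Relation.reflTransGen_swap.mp h1⟩,
      fun ⟨h1, h2⟩ => ⟨Relation.reflTransGen_swap.mpr h2, Relation.reflTransGen_swap.mpr h1⟩⟩
  · intro j hj i hij
    exact hC.2 j hj i hij

/-- Let `D` be a digraph on a finite nonempty vertex set `V`, and let `D'` be a digraph on
`V` containing all edges of `D` and, for every sink strong component `S` of `D` and every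
source strong component `T` of `D`, at least one edge from a vertex of `S` to a vertex of
`T`.  Then `D'` is strongly connected. -/
theorem strongly_connected_of_sink_to_source {V : Type*} [Fintype V] [DecidableEq V]
    [Nonempty V] (D D' : V → V → Prop)
    (hsub : ∀ u v : V, D u v → D' u v)
    (hlink : ∀ S T : Finset V, IsSinkComp D S → IsSourceComp D T →
      ∃ i ∈ S, ∃ j ∈ T, D' i j) :
    ∀ u v : V, Relation.ReflTransGen D' u v := by
  intro u v
  obtain ⟨S, hS, w, hwS, huw⟩ := exists_sink D u
  obtain ⟨T, hT, x, hxT, hxv⟩ := exists_source D v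
  obtain ⟨i, hiS, j, hjT, hij⟩ := hlink S T hS hT
  obtain ⟨s, hs⟩ := hS.1
  obtain ⟨t, ht⟩ := hT.1
  have lift : ∀ a b : V, Relation.ReflTransGen D a b → Relation.ReflTransGen D' a b :=
    fun a b hab => Relation.ReflTransGen.mono (fun p q => hsub p q) a b hab
  rw [hs] at hwS hiS
  rw [ht] at hxT hjT
  simp only [strongComp, Finset.mem_filter, Finset.mem_univ, true_and] at hwS hiS hxT hjT
  have h1 : Relation.ReflTransGen D' u i :=
    (lift _ _ huw).trans ((lift _ _ hwS.2).trans (lift _ _ hiS.1))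
  have h2 : Relation.ReflTransGen D' j v :=
    (lift _ _ hjT.2).trans ((lift _ _ hxT.1).trans (lift _ _ hxv))
  exact h1.trans ((Relation.ReflTransGen.single hij).trans h2)
end
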